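/- arXiv:2205.10934 — 8 statements merged into one kernel-verified Lean document; each statement's English description precedes it below -/
import Mathlib

section
/- Let f_i : ℝ^d → ℝ (i = 1,…,m) be convex functions and F(θ) = (1/m)∑_{i=1}^m f_i(θ), and assume F attains its minimum. Suppose sequences {x_i^k} ⊆ ℝ^d (i = 1,…,m, k ≥ 0), with x̄^k := (1/m)∑_{i=1}^m x_i^k, satisfy: for every minimizer θ* of F and all k ≥ 0, setting v₁^k := ‖x̄^k − θ*‖², v₂^k := ∑_{i=1}^m ‖x_i^k − x̄^k‖², and ζ^k := ∑_{i=1}^m (f_i(x̄^k) − f_i(θ*)), the componentwise inequalities v₁^{k+1} ≤ (1 + a^k) v₁^k + (1 + a^k) v₂^k + b^k − c^k ζ^k and v₂^{k+1} ≤ a^k v₁^k + (η + a^k) v₂^k + b^k hold, where η ∈ (0,1) and {a^k}, {b^k}, {c^k} are nonnegative scalar sequences with ∑_{k=0}^∞ a^k < ∞, ∑_{k=0}^∞ b^k < ∞, and ∑_{k=0}^∞ c^k = ∞. Then lim_{k→∞} ‖x_i^k − x̄^k‖ = 0 for all i, and there exists a minimizer θ* of F such that lim_{k→∞} ‖x̄^k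 − θ*‖ = 0. -/
open Filter Topology

/-- Deterministic Robbins–Siegmund lemma. -/
lemma rs_lemma {V A B Z : ℕ → ℝ} (hV : ∀ k, 0 ≤ V k) (hA : ∀ k, 0 ≤ A k)
    (hB : ∀ k, 0 ≤ B k) (hZ : ∀ k, 0 ≤ Z k)
    (hAS : Summable A) (hBS : Summable B)
    (hrec : ∀ k, V (k + 1) ≤ (1 + A k) * V k + B k - Z k) :
    (∃ L, Tendsto V atTop (𝓝 L)) ∧ Summable Z := by
  set P : ℕ → ℝ := fun n => ∏ j ∈ Finset.range n, (1 + A j) with hP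
  have hPsucc : ∀ n, P (n + 1) = P n * (1 + A n) := fun n => Finset.prod_range_succ _ n
  have hP1 : ∀ n, (1 : ℝ) ≤ P n := by
    intro n
    induction n with
    | zero => simp [hP]
    | succ n ih => rw [hPsucc n]; nlinarith [hA n]
  have hPpos : ∀ n, (0 : ℝ) < P n := fun n => lt_of_lt_of_le one_pos (hP1 n)
  have hPmono : Monotone P := monotone_nat_of_le_succ fun n => by
    rw [hPsucc n]; nlinarith [hPpos n, hA n]
  have hPbd : ∀ n, P n ≤ Real.exp (∑' k, A k) := by
    intro n
    calc P n ≤ ∏ j ∈ Finset.range n, Real.exp (A j) :=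
          Finset.prod_le_prod (fun j _ => by linarith [hA j])
            (fun j _ => by linarith [Real.add_one_le_exp (A j)])
      _ = Real.exp (∑ j ∈ Finset.range n, A j) := (Real.exp_sum _ _).symm
      _ ≤ Real.exp (∑' k, A k) :=
          Real.exp_le_exp.2 (Summable.sum_le_tsum _ (fun j _ => hA j) hAS)
  obtain ⟨Pinf, hPinf⟩ : ∃ Pinf, Tendsto P atTop (𝓝 Pinf) := by
    rcases tendsto_of_monotone hPmono with h | h
    · exfalso
      obtain ⟨n, hn⟩ := (h.eventually_gt_atTop (Real.exp (∑' k, A k))).exists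
      exact absurd (hPbd n) (not_le.2 hn)
    · exact h
  -- key scaled recursion
  have hkey : ∀ n, V (n + 1) / P (n + 1) ≤ V n / P n + B n / P (n + 1) - Z n / P (n + 1) := by
    intro n
    have h1 : V (n + 1) / P (n + 1) ≤ ((1 + A n) * V n + B n - Z n) / P (n + 1) :=
      (div_le_div_iff_of_pos_right (hPpos (n + 1))).2 (hrec n)
    have h2 : ((1 + A n) * V n) / P (n + 1) = V n / P n := by
      rw [hPsucc n]
      rw [div_eq_div_iff (mul_pos (hPpos n) (by linarith [hA n] : (0:ℝ) < 1 + A n)).ne' (hPpos n).ne']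
      ring
    calc V (n + 1) / P (n + 1) ≤ ((1 + A n) * V n + B n - Z n) / P (n + 1) := h1
      _ = ((1 + A n) * V n) / P (n + 1) + B n / P (n + 1) - Z n / P (n + 1) := by ring
      _ = V n / P n + B n / P (n + 1) - Z n / P (n + 1) := by rw [h2]
  set TB : ℕ → ℝ := fun n => ∑ j ∈ Finset.range n, B j / P (j + 1) with hTB
  set TZ : ℕ → ℝ := fun n => ∑ j ∈ Finset.range n, Z j / P (j + 1) with hTZ
  set W : ℕ → ℝ := fun n => V n / P n + TZ n - TB n with hW
  have hTBle : ∀ n, TB n ≤ ∑' k, B k := by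
    intro n
    calc TB n ≤ ∑ j ∈ Finset.range n, B j :=
          Finset.sum_le_sum fun j _ => by
            rw [div_le_iff₀ (hPpos (j + 1))]
            nlinarith [hB j, hP1 (j + 1)]
      _ ≤ ∑' k, B k := Summable.sum_le_tsum _ (fun j _ => hB j) hBS
  have hWanti : Antitone W := antitone_nat_of_succ_le fun n => by
    have := hkey n
    simp only [hW, hTZ, hTB, Finset.sum_range_succ]
    linarith
  have hWlb : ∀ n, -(∑' k, B k) ≤ W n := by
    intro n
    have h1 : 0 ≤ V n / P n := div_nonneg (hV n) (hPpos n).le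
    have h2 : 0 ≤ TZ n := Finset.sum_nonneg fun j _ => div_nonneg (hZ j) (hPpos (j + 1)).le
    have := hTBle n
    simp only [hW]; linarith
  obtain ⟨w, hw⟩ : ∃ w, Tendsto W atTop (𝓝 w) := by
    rcases tendsto_of_antitone hWanti with h | h
    · exfalso
      obtain ⟨n, hn⟩ := (h.eventually_lt_atBot (-(∑' k, B k))).exists
      exact absurd (hWlb n) (not_le.2 hn)
    · exact h
  -- Summability of Z / P(j+1), then of Z
  have hTZbd : ∀ n, TZ n ≤ W 0 + ∑' k, B k := by
    intro n
    have h1 : 0 ≤ V n / P n := div_nonneg (hV n) (hPpos n).le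
    have h2 : W n ≤ W 0 := hWanti (Nat.zero_le n)
    have h3 : TZ 0 = 0 := by simp [hTZ]
    have h4 : TB 0 = 0 := by simp [hTB]
    have := hTBle n
    have h5 : W 0 = V 0 / P 0 + TZ 0 - TB 0 := by simp only [hW]
    simp only [hW] at h2
    clear_value W TZ TB
    linarith
  have hZPsum : Summable (fun j => Z j / P (j + 1)) :=
    summable_of_sum_range_le (fun j => div_nonneg (hZ j) (hPpos (j + 1)).le) hTZbd
  have hZsum : Summable Z := by
    refine Summable.of_nonneg_of_le hZ (fun j => ?_) (hZPsum.mul_right (Real.exp (∑' k, A k)))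
    rw [div_mul_eq_mul_div, le_div_iff₀ (hPpos (j + 1))]
    exact mul_le_mul_of_nonneg_left (hPbd (j + 1)) (hZ j)
  refine ⟨?_, hZsum⟩
  -- B / P(j+1) summable
  have hBPsum : Summable (fun j => B j / P (j + 1)) := by
    refine Summable.of_nonneg_of_le (fun j => div_nonneg (hB j) (hPpos (j + 1)).le)
      (fun j => ?_) hBS
    rw [div_le_iff₀ (hPpos (j + 1))]
    nlinarith [hB j, hP1 (j + 1)]
  have hTZt : Tendsto TZ atTop (𝓝 (∑' j, Z j / P (j + 1))) := hZPsum.hasSum.tendsto_sum_nat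
  have hTBt : Tendsto TB atTop (𝓝 (∑' j, B j / P (j + 1))) := hBPsum.hasSum.tendsto_sum_nat
  have hVP : Tendsto (fun n => V n / P n) atTop
      (𝓝 (w - (∑' j, Z j / P (j + 1)) + (∑' j, B j / P (j + 1)))) := by
    have : (fun n => V n / P n) = fun n => W n - TZ n + TB n := by
      funext n; simp only [hW]; ring
    rw [this]
    exact (hw.sub hTZt).add hTBt
  refine ⟨(w - (∑' j, Z j / P (j + 1)) + (∑' j, B j / P (j + 1))) * Pinf, ?_⟩
  have : V = fun n => (V n / P n) * P n := by
    funext n; exact (div_mul_cancel₀ (V n) (hPpos n).ne').symm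
  rw [this]
  exact hVP.mul hPinf

/-- Linear contraction with summable perturbation drives the sequence to zero. -/
lemma contract_lemma {u e : ℕ → ℝ} {r : ℝ} (hr0 : 0 ≤ r) (hr1 : r < 1)
    (hu : ∀ k, 0 ≤ u k) (he0 : ∀ k, 0 ≤ e k) (heS : Summable e)
    (hrec : ∀ k, u (k + 1) ≤ r * u k + e k) :
    Tendsto u atTop (𝓝 0) := by
  set S : ℕ → ℝ := fun n => ∑ j ∈ Finset.range n, e j with hS
  obtain ⟨s, hs⟩ : ∃ s, Tendsto S atTop (𝓝 s) := ⟨∑' j, e j, heS.hasSum.tendsto_sum_nat⟩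
  rw [Metric.tendsto_atTop]
  intro ε hε
  -- choose N with S close to s
  obtain ⟨N, hN⟩ := (Metric.tendsto_atTop.1 hs (ε / 3)) (by linarith)
  have hSd : ∀ n, S (N + n) - S N < 2 * (ε / 3) := by
    intro n
    have h1 := hN N le_rfl
    have h2 := hN (N + n) (Nat.le_add_right _ _)
    rw [Real.dist_eq] at h1 h2
    have := abs_lt.1 h1
    have := abs_lt.1 h2
    linarith [this.1, this.2, (abs_lt.1 h1).1, (abs_lt.1 h1).2]
  -- induction bound
  have hind : ∀ n, u (N + n) ≤ r ^ n * u N + (S (N + n) - S N) := by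
    intro n
    induction n with
    | zero => simp
    | succ n ih =>
      have h1 : u (N + n + 1) ≤ r * u (N + n) + e (N + n) := hrec (N + n)
      have h2 : S (N + n + 1) = S (N + n) + e (N + n) := Finset.sum_range_succ _ _
      have h3 : 0 ≤ S (N + n) - S N := by
        have : S N ≤ S (N + n) := Finset.sum_le_sum_of_subset_of_nonneg
          (Finset.range_subset_range.2 (Nat.le_add_right _ _)) (fun j _ _ => he0 j)
        linarith
      have h4 : r * u (N + n) ≤ r * (r ^ n * u N + (S (N + n) - S N)) :=
        mul_le_mul_of_nonneg_left ih hr0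
      have h5 : r * (S (N + n) - S N) ≤ S (N + n) - S N := by nlinarith
      have heq : N + (n + 1) = (N + n) + 1 := rfl
      rw [heq, pow_succ]
      rw [show (N + n) + 1 = N + n + 1 from rfl] at h1
      nlinarith
  -- pick n0 with r^n * u N small
  have hpow : Tendsto (fun n => r ^ n * u N) atTop (𝓝 0) := by
    simpa using (tendsto_pow_atTop_nhds_zero_of_lt_one hr0 hr1).mul_const (u N)
  obtain ⟨n0, hn0⟩ := (Metric.tendsto_atTop.1 hpow (ε / 3)) (by linarith)
  refine ⟨N + n0, fun k hk => ?_⟩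
  have hkN : N ≤ k := le_trans (Nat.le_add_right _ _) hk
  obtain ⟨n, rfl⟩ := Nat.exists_eq_add_of_le hkN
  have hn : n0 ≤ n := by omega
  have h1 := hind n
  have h2 := hSd n
  have h3 := hn0 n hn
  rw [Real.dist_eq] at h3 ⊢
  have h4 : r ^ n * u N < ε / 3 := lt_of_abs_lt (by simpa using h3)
  rw [abs_of_nonneg (by simpa using hu (N + n))]
  simp only [sub_zero]
  linarith

lemma freq_small {c z : ℕ → ℝ} (hc0 : ∀ k, 0 ≤ c k) (hz0 : ∀ k, 0 ≤ z k)
    (hcdiv : Tendsto (fun n => ∑ k ∈ Finset.range n, c k) atTop atTop)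
    (hS : Summable (fun k => c k * z k)) :
    ∀ ε > 0, ∃ᶠ k in atTop, z k < ε := by
  intro ε hε
  by_contra h
  rw [Filter.not_frequently] at h
  simp only [not_lt] at h
  obtain ⟨N, hN⟩ := eventually_atTop.1 h
  have h1 : Summable (fun k => c (k + N) * z (k + N)) := (summable_nat_add_iff N).2 hS
  have h2 : Summable (fun k => ε * c (k + N)) := by
    refine Summable.of_nonneg_of_le (fun k => mul_nonneg hε.le (hc0 _)) (fun k => ?_) h1
    have := hN (k + N) (Nat.le_add_left _ _)
    nlinarith [hc0 (k + N)]
  have h3 : Summable (fun k => c (k + N)) := by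
    have h := h2.mul_left ε⁻¹
    have heq : (fun i => ε⁻¹ * (ε * c (i + N))) = fun i => c (i + N) := by
      funext i; field_simp
    rwa [heq] at h
  have h4 : Summable c := (summable_nat_add_iff N).1 h3
  exact not_tendsto_nhds_of_tendsto_atTop hcdiv _ h4.hasSum.tendsto_sum_nat


/-- Proposition 1: general convergence result for decentralized algorithms. -/
theorem stmt_0 {d m : ℕ} (hm : 0 < m)
    (f : Fin m → EuclideanSpace ℝ (Fin d) → ℝ)
    (hconv : ∀ i, ConvexOn ℝ Set.univ (f i))
    (F : EuclideanSpace ℝ (Fin d) → ℝ)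
    (hF : ∀ θ, F θ = (1 / (m : ℝ)) * ∑ i, f i θ)
    (hmin : ∃ θs, ∀ y, F θs ≤ F y)
    (x : ℕ → Fin m → EuclideanSpace ℝ (Fin d))
    (xbar : ℕ → EuclideanSpace ℝ (Fin d))
    (hxbar : ∀ k, xbar k = (1 / (m : ℝ)) • ∑ i, x k i)
    (η : ℝ) (hη : η ∈ Set.Ioo (0 : ℝ) 1)
    (a b c : ℕ → ℝ)
    (ha0 : ∀ k, 0 ≤ a k) (hb0 : ∀ k, 0 ≤ b k) (hc0 : ∀ k, 0 ≤ c k)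
    (haS : Summable a) (hbS : Summable b)
    (hcdiv : Tendsto (fun n => ∑ k ∈ Finset.range n, c k) atTop atTop)
    (hrec1 : ∀ θs, (∀ y, F θs ≤ F y) → ∀ k,
      ‖xbar (k + 1) - θs‖ ^ 2 ≤
        (1 + a k) * ‖xbar k - θs‖ ^ 2
          + (1 + a k) * (∑ i, ‖x k i - xbar k‖ ^ 2)
          + b k - c k * (∑ i, (f i (xbar k) - f i θs)))
    (hrec2 : ∀ θs, (∀ y, F θs ≤ F y) → ∀ k,
      (∑ i, ‖x (k + 1) i - xbar (k + 1)‖ ^ 2) ≤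
        a k * ‖xbar k - θs‖ ^ 2 + (η + a k) * (∑ i, ‖x k i - xbar k‖ ^ 2) + b k) :
    (∀ i, Tendsto (fun k => ‖x k i - xbar k‖) atTop (𝓝 0)) ∧
      ∃ θs, (∀ y, F θs ≤ F y) ∧ Tendsto (fun k => ‖xbar k - θs‖) atTop (𝓝 0) := by
  obtain ⟨θ₀, hθ₀⟩ := hmin
  have hmpos : (0 : ℝ) < m := Nat.cast_pos.2 hm
  obtain ⟨hη0, hη1⟩ := hη
  set lam : ℝ := 2 / (1 - η) with hlam
  have hlam_eq : lam * (1 - η) = 2 := by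
    rw [hlam]; exact div_mul_cancel₀ 2 (by linarith : (1:ℝ) - η ≠ 0)
  have hlam2 : (2 : ℝ) ≤ lam := by nlinarith
  set C : ℝ := 1 + lam with hC
  set v2 : ℕ → ℝ := fun k => ∑ i, ‖x k i - xbar k‖ ^ 2 with hv2
  have hv2_0 : ∀ k, 0 ≤ v2 k := fun k => Finset.sum_nonneg fun i _ => sq_nonneg _
  have hsumf : ∀ θ, ∑ i, f i θ = m * F θ := by
    intro θ; rw [hF θ]; field_simp
  have hzeta0 : ∀ θs, (∀ y, F θs ≤ F y) → ∀ k, 0 ≤ ∑ i, (f i (xbar k) - f i θs) := by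
    intro θs hθs k
    rw [Finset.sum_sub_distrib, hsumf, hsumf]
    have := hθs (xbar k)
    nlinarith
  have hzeq : ∀ θs, ∀ k, ∑ i, (f i (xbar k) - f i θs)
      = m * F (xbar k) - m * F θs := by
    intro θs k; rw [Finset.sum_sub_distrib, hsumf, hsumf]
  -- key combined recursion + Robbins–Siegmund, for any minimizer
  have key : ∀ θs, (∀ y, F θs ≤ F y) →
      (∃ L, Tendsto (fun k => ‖xbar k - θs‖ ^ 2 + lam * v2 k) atTop (𝓝 L)) ∧
        Summable (fun k => c k * ∑ i, (f i (xbar k) - f i θs)) := by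
    intro θs hθs
    refine rs_lemma (V := fun k => ‖xbar k - θs‖ ^ 2 + lam * v2 k)
      (A := fun k => C * a k) (B := fun k => C * b k)
      (Z := fun k => c k * ∑ i, (f i (xbar k) - f i θs))
      (fun k => add_nonneg (sq_nonneg _)
        (mul_nonneg (by linarith : (0:ℝ) ≤ lam) (hv2_0 k)))
      (fun k => mul_nonneg (show (0:ℝ) ≤ C by rw [hC]; linarith) (ha0 k))
      (fun k => mul_nonneg (show (0:ℝ) ≤ C by rw [hC]; linarith) (hb0 k))
      (fun k => mul_nonneg (hc0 k) (hzeta0 θs hθs k))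
      (haS.mul_left C) (hbS.mul_left C) ?_
    intro k
    have h1 := hrec1 θs hθs k
    have h2 := hrec2 θs hθs k
    have hcoef : 1 + a k + lam * η + lam * a k ≤ lam * (1 + C * a k) := by
      have h6 : (0 : ℝ) ≤ (lam * lam - 1) * a k :=
        mul_nonneg (by nlinarith) (ha0 k)
      rw [hC]; nlinarith
    have h2' : lam * (∑ i, ‖x (k+1) i - xbar (k+1)‖ ^ 2) ≤
        lam * (a k * ‖xbar k - θs‖ ^ 2 + (η + a k) * v2 k + b k) :=
      mul_le_mul_of_nonneg_left h2 (by linarith)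
    have h3 : (1 + a k + lam * η + lam * a k) * v2 k ≤ (lam * (1 + C * a k)) * v2 k :=
      mul_le_mul_of_nonneg_right hcoef (hv2_0 k)
    simp only [hv2] at h2' h3 h1 ⊢
    rw [hC] at h3 ⊢
    nlinarith [h1, h2', h3]
  obtain ⟨⟨L0, hL0⟩, hZ0sum⟩ := key θ₀ hθ₀
  -- a uniform bound
  obtain ⟨M, hM⟩ : ∃ M, ∀ k, ‖xbar k - θ₀‖ ^ 2 + lam * v2 k ≤ M := by
    obtain ⟨M, hM⟩ := hL0.bddAbove_range
    exact ⟨M, fun k => hM (Set.mem_range_self k)⟩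
  have hM0 : 0 ≤ M := le_trans (by nlinarith [sq_nonneg ‖xbar 0 - θ₀‖, hv2_0 0]) (hM 0)
  have hv1M : ∀ k, ‖xbar k - θ₀‖ ^ 2 ≤ M := fun k => by nlinarith [hM k, hv2_0 k]
  -- v2 → 0
  have hv2tend : Tendsto v2 atTop (𝓝 0) := by
    obtain ⟨N, hN⟩ := eventually_atTop.1
      (haS.tendsto_atTop_zero.eventually_lt_const (by linarith : (0:ℝ) < (1 - η)/2))
    have h := contract_lemma (u := fun n => v2 (N + n))
        (e := fun n => M * a (N + n) + b (N + n)) (r := (1 + η)/2)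
        (by linarith) (by linarith)
        (fun n => hv2_0 _)
        (fun n => add_nonneg (mul_nonneg hM0 (ha0 _)) (hb0 _))
        (by
          have := (summable_nat_add_iff N).2 ((haS.mul_left M).add hbS)
          simpa [Nat.add_comm] using this)
        ?_
    · have heq : (fun n => v2 (N + n)) = fun n => v2 (n + N) := by
        funext n; rw [Nat.add_comm]
      rw [heq] at h
      exact (tendsto_add_atTop_iff_nat N).1 h
    · intro n
      have h2 := hrec2 θ₀ hθ₀ (N + n)
      have hb1 : a (N + n) < (1 - η)/2 := hN (N + n) (Nat.le_add_right _ _)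
      have h4 : a (N + n) * ‖xbar (N + n) - θ₀‖ ^ 2 ≤ a (N + n) * M :=
        mul_le_mul_of_nonneg_left (hv1M _) (ha0 _)
      have h5 : (η + a (N + n)) * v2 (N + n) ≤ ((1 + η)/2) * v2 (N + n) :=
        mul_le_mul_of_nonneg_right (by linarith) (hv2_0 _)
      show v2 (N + (n + 1)) ≤ (1 + η) / 2 * v2 (N + n) + (M * a (N + n) + b (N + n))
      have heq : N + (n + 1) = (N + n) + 1 := rfl
      rw [heq]
      simp only [hv2] at h2 h5 ⊢
      nlinarith [h2, h4, h5]
  -- Part 1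
  have part1 : ∀ i, Tendsto (fun k => ‖x k i - xbar k‖) atTop (𝓝 0) := by
    intro i
    have hsq : Tendsto (fun k => ‖x k i - xbar k‖ ^ 2) atTop (𝓝 0) := by
      refine squeeze_zero (fun k => sq_nonneg _) (fun k => ?_) hv2tend
      exact Finset.single_le_sum (f := fun j => ‖x k j - xbar k‖ ^ 2)
        (fun j _ => sq_nonneg _) (Finset.mem_univ i)
    have heq : (fun k => ‖x k i - xbar k‖) = fun k => Real.sqrt (‖x k i - xbar k‖ ^ 2) :=
      funext fun k => (Real.sqrt_sq (norm_nonneg _)).symm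
    rw [heq]
    have h2 : Tendsto (fun k => Real.sqrt (‖x k i - xbar k‖ ^ 2)) atTop (𝓝 (Real.sqrt 0)) :=
      (Real.continuous_sqrt.tendsto 0).comp hsq
    rwa [Real.sqrt_zero] at h2
  -- continuity of F
  have hFcont : Continuous F := by
    have hfc : ∀ i, Continuous (f i) := fun i => (hconv i).locallyLipschitz.continuous
    have hFeq : F = fun θ => (1 / (m : ℝ)) * ∑ i, f i θ := funext hF
    rw [hFeq]
    exact continuous_const.mul (continuous_finset_sum _ fun i _ => hfc i)
  -- subsequence along which ζ → 0
  have hfreq := freq_small hc0 (hzeta0 θ₀ hθ₀) hcdiv hZ0sum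
  obtain ⟨φ, hφmono, hφ⟩ := extraction_forall_of_frequently
    (P := fun n k => ∑ i, (f i (xbar k) - f i θ₀) < 1 / ((n : ℝ) + 1))
    (fun n => hfreq (1 / ((n : ℝ) + 1)) (by positivity))
  have hζφ : Tendsto (fun n => ∑ i, (f i (xbar (φ n)) - f i θ₀)) atTop (𝓝 0) :=
    squeeze_zero (fun n => hzeta0 θ₀ hθ₀ _) (fun n => (hφ n).le)
      tendsto_one_div_add_atTop_nhds_zero_nat
  -- bounded, extract convergent sub-subsequence
  have hmem : ∀ n, xbar (φ n) ∈ Metric.closedBall θ₀ (Real.sqrt M) := by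
    intro n
    rw [Metric.mem_closedBall, dist_eq_norm]
    exact (Real.le_sqrt (norm_nonneg _) hM0).2 (hv1M _)
  obtain ⟨θhat, -, ψ, hψmono, hψ0⟩ :=
    tendsto_subseq_of_bounded Metric.isBounded_closedBall hmem
  have hψ : Tendsto (fun n => xbar (φ (ψ n))) atTop (𝓝 θhat) := hψ0
  -- θhat is a minimizer
  have hζsub : Tendsto (fun n => ∑ i, (f i (xbar (φ (ψ n))) - f i θ₀)) atTop (𝓝 0) := by
    have := hζφ.comp hψmono.tendsto_atTop
    simpa [Function.comp_def] using this
  have hζsub2 : Tendsto (fun n => ∑ i, (f i (xbar (φ (ψ n))) - f i θ₀)) atTop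
      (𝓝 ((m : ℝ) * F θhat - m * F θ₀)) := by
    have h1 : Tendsto (fun n => F (xbar (φ (ψ n)))) atTop (𝓝 (F θhat)) :=
      (hFcont.tendsto θhat).comp hψ
    have h2 : Tendsto (fun n => (m : ℝ) * F (xbar (φ (ψ n))) - m * F θ₀) atTop
        (𝓝 ((m : ℝ) * F θhat - m * F θ₀)) := (h1.const_mul _).sub_const _
    have heq : (fun n => ∑ i, (f i (xbar (φ (ψ n))) - f i θ₀))
        = fun n => (m : ℝ) * F (xbar (φ (ψ n))) - m * F θ₀ := funext fun n => hzeq θ₀ _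
    rw [heq]; exact h2
  have hFhat : F θhat = F θ₀ := by
    have h0 := tendsto_nhds_unique hζsub hζsub2
    have hm' : (m : ℝ) ≠ 0 := ne_of_gt hmpos
    have h3 : (m : ℝ) * F θhat = m * F θ₀ := by linarith
    exact mul_left_cancel₀ hm' h3
  have hθhatmin : ∀ y, F θhat ≤ F y := fun y => hFhat ▸ hθ₀ y
  -- convergence of ‖xbar k - θhat‖²
  obtain ⟨⟨L1, hL1⟩, -⟩ := key θhat hθhatmin
  have hv1hat : Tendsto (fun k => ‖xbar k - θhat‖ ^ 2) atTop (𝓝 L1) := by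
    have h1 := hL1.sub (hv2tend.const_mul lam)
    simp only [mul_zero, sub_zero] at h1
    have heq : (fun k => ‖xbar k - θhat‖ ^ 2 + lam * v2 k - lam * v2 k)
        = fun k => ‖xbar k - θhat‖ ^ 2 := by funext k; ring
    rwa [heq] at h1
  have hsubzero : Tendsto (fun n => ‖xbar (φ (ψ n)) - θhat‖ ^ 2) atTop (𝓝 0) := by
    have h1 : Tendsto (fun n => ‖xbar (φ (ψ n)) - θhat‖) atTop (𝓝 0) :=
      tendsto_iff_norm_sub_tendsto_zero.1 hψ
    have h2 := h1.pow 2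
    simpa using h2
  have hL1eq : L1 = 0 := by
    have h2 := hv1hat.comp (hφmono.comp hψmono).tendsto_atTop
    have h2' : Tendsto (fun n => ‖xbar (φ (ψ n)) - θhat‖ ^ 2) atTop (𝓝 L1) := by
      simpa [Function.comp_def] using h2
    exact tendsto_nhds_unique h2' hsubzero
  have hfinal : Tendsto (fun k => ‖xbar k - θhat‖) atTop (𝓝 0) := by
    rw [hL1eq] at hv1hat
    have heq : (fun k => ‖xbar k - θhat‖) = fun k => Real.sqrt (‖xbar k - θhat‖ ^ 2) :=
      funext fun k => (Real.sqrt_sq (norm_nonneg _)).symm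
    rw [heq]
    have h2 : Tendsto (fun k => Real.sqrt (‖xbar k - θhat‖ ^ 2)) atTop (𝓝 (Real.sqrt 0)) :=
      (Real.continuous_sqrt.tendsto 0).comp hv1hat
    rwa [Real.sqrt_zero] at h2
  exact ⟨part1, θhat, hθhatmin, hfinal⟩
end

section
/- Let {v^k} ⊂ ℝ^d and {u^k} ⊂ ℝ^p be sequences of nonnegative vectors such that v^{k+1} ≤ (V^k + a^k 𝟙𝟙ᵀ) v^k + b^k 𝟙 − C^k u^k holds entrywise for all k ≥ 0, where {V^k} is a sequence of entrywise nonnegative d×d matrices, C^k ∈ ℝ^{d×p}, and {a^k}, {b^k} are nonnegative scalar sequences with ∑_{k=0}^∞ a^k < ∞ and ∑_{k=0}^∞ b^k < ∞. Assume there exists a vector π ∈ ℝ^d with all entries positive such that πᵀ V^k ≤ πᵀ and πᵀ C^k ≥ 0 (entrywise) for all k ≥ 0. Then lim_{k→∞} πᵀ v^k exists, the sequence {v^k} is bounded, and ∑_{k=1}^∞ πᵀ C^k u^k < ∞. -/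
open Filter Topology Finset

lemma robbins_aux (w s α β : ℕ → ℝ) (hw : ∀ k, 0 ≤ w k) (hs : ∀ k, 0 ≤ s k)
    (hα : ∀ k, 0 ≤ α k) (hβ : ∀ k, 0 ≤ β k) (hαS : Summable α) (hβS : Summable β)
    (hrec : ∀ k, w (k + 1) ≤ (1 + α k) * w k + β k - s k) :
    (∃ l, Tendsto w atTop (𝓝 l)) ∧ Summable s := by
  set P : ℕ → ℝ := fun k => ∏ j ∈ Finset.range k, (1 + α j) with hPdef
  have hP1 : ∀ k, 1 ≤ P k := by
    intro k
    have h : ∏ j ∈ Finset.range k, (1:ℝ) ≤ ∏ j ∈ Finset.range k, (1 + α j) :=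
      Finset.prod_le_prod (fun _ _ => zero_le_one) (fun j _ => by linarith [hα j])
    simpa using h
  have hPpos : ∀ k, 0 < P k := fun k => lt_of_lt_of_le one_pos (hP1 k)
  have hPsucc : ∀ k, P (k + 1) = P k * (1 + α k) := fun k => Finset.prod_range_succ _ k
  have hPmono : Monotone P := by
    apply monotone_nat_of_le_succ
    intro k
    rw [hPsucc k]
    nlinarith [hPpos k, hα k]
  have hPbd : ∀ k, P k ≤ Real.exp (∑' j, α j) := by
    intro k
    calc P k ≤ ∏ j ∈ Finset.range k, Real.exp (α j) :=
          Finset.prod_le_prod (fun j _ => by linarith [hα j])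
            (fun j _ => by linarith [Real.add_one_le_exp (α j)])
      _ = Real.exp (∑ j ∈ Finset.range k, α j) := by rw [Real.exp_sum]
      _ ≤ Real.exp (∑' j, α j) := Real.exp_le_exp.mpr (Summable.sum_le_tsum _ (fun j _ => hα j) hαS)
  have hPbdd : BddAbove (Set.range P) := ⟨Real.exp (∑' j, α j), by rintro x ⟨k, rfl⟩; exact hPbd k⟩
  have hPlim : Tendsto P atTop (𝓝 (⨆ k, P k)) := tendsto_atTop_ciSup hPmono hPbdd
  set y : ℕ → ℝ := fun k => w k / P k with hydef
  have hkey : ∀ k, y (k + 1) + s k / P (k + 1) ≤ y k + β k / P (k + 1) := by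
    intro k
    have h1 : w (k + 1) + s k ≤ (1 + α k) * w k + β k := by linarith [hrec k]
    have h2 := (div_le_div_iff_of_pos_right (hPpos (k + 1))).mpr h1
    have hne : P k ≠ 0 := (hPpos k).ne'
    have hne2 : (1 + α k) ≠ 0 := by linarith [hα k]
    have e1 : (w (k + 1) + s k) / P (k + 1) = y (k + 1) + s k / P (k + 1) := add_div _ _ _
    have e2 : ((1 + α k) * w k + β k) / P (k + 1) = y k + β k / P (k + 1) := by
      rw [add_div]
      congr 1
      rw [hPsucc]
      show (1 + α k) * w k / (P k * (1 + α k)) = w k / P k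
      field_simp
    rw [e1, e2] at h2
    exact h2
  -- β j / P (j+1) is summable
  have hβ' : Summable (fun j => β j / P (j + 1)) := by
    apply Summable.of_nonneg_of_le (fun j => div_nonneg (hβ j) (hPpos (j + 1)).le)
      (fun j => div_le_self (hβ j) (hP1 (j + 1))) hβS
  set T : ℕ → ℝ := fun k => ∑ j ∈ Finset.range k, β j / P (j + 1) with hTdef
  have hTlim : Tendsto T atTop (𝓝 (∑' j, β j / P (j + 1))) := hβ'.hasSum.tendsto_sum_nat
  set z : ℕ → ℝ := fun k => y k - T k with hzdef
  have hzanti : Antitone z := by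
    apply antitone_nat_of_succ_le
    intro k
    have h1 := hkey k
    have h2 : 0 ≤ s k / P (k + 1) := div_nonneg (hs k) (hPpos (k + 1)).le
    have hT : T (k + 1) = T k + β k / P (k + 1) := Finset.sum_range_succ _ k
    simp only [hzdef]
    rw [hT]
    linarith
  have hzbd : ∀ k, -(∑' j, β j / P (j + 1)) ≤ z k := by
    intro k
    have hy : 0 ≤ y k := div_nonneg (hw k) (hPpos k).le
    have hT : T k ≤ ∑' j, β j / P (j + 1) :=
      Summable.sum_le_tsum _ (fun j _ => div_nonneg (hβ j) (hPpos (j + 1)).le) hβ'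
    simp only [hzdef]
    linarith
  have hzbdd : BddBelow (Set.range z) :=
    ⟨-(∑' j, β j / P (j + 1)), by rintro x ⟨k, rfl⟩; exact hzbd k⟩
  have hzlim : Tendsto z atTop (𝓝 (⨅ k, z k)) := tendsto_atTop_ciInf hzanti hzbdd
  have hylim : Tendsto y atTop (𝓝 ((⨅ k, z k) + ∑' j, β j / P (j + 1))) := by
    have : y = fun k => z k + T k := by funext k; simp [hzdef]
    rw [this]
    exact hzlim.add hTlim
  have hwlim : Tendsto w atTop (𝓝 (((⨅ k, z k) + ∑' j, β j / P (j + 1)) * ⨆ k, P k)) := by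
    have : w = fun k => y k * P k := by
      funext k
      simp only [hydef]
      exact (div_mul_cancel₀ (w k) (hPpos k).ne').symm
    rw [this]
    exact hylim.mul hPlim
  refine ⟨⟨_, hwlim⟩, ?_⟩
  -- summability of s
  have hs' : Summable (fun k => s k / P (k + 1)) := by
    apply summable_of_sum_range_le (c := z 0 + ∑' j, β j / P (j + 1))
      (fun k => div_nonneg (hs k) (hPpos (k + 1)).le)
    intro n
    have htel : ∑ k ∈ Finset.range n, (z k - z (k + 1)) = z 0 - z n :=
      Finset.sum_range_sub' z n
    have hle : ∑ k ∈ Finset.range n, s k / P (k + 1) ≤ ∑ k ∈ Finset.range n, (z k - z (k + 1)) := by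
      apply Finset.sum_le_sum
      intro k _
      have h1 := hkey k
      have hT : T (k + 1) = T k + β k / P (k + 1) := Finset.sum_range_succ _ k
      simp only [hzdef]
      rw [hT]
      linarith
    rw [htel] at hle
    have := hzbd n
    linarith
  have : Summable (fun k => s k / P (k + 1) * Real.exp (∑' j, α j)) := hs'.mul_right _
  apply Summable.of_nonneg_of_le hs _ this
  intro k
  calc s k = s k / P (k + 1) * P (k + 1) := (div_mul_cancel₀ _ (hPpos (k + 1)).ne').symm
    _ ≤ s k / P (k + 1) * Real.exp (∑' j, α j) :=
        mul_le_mul_of_nonneg_left (hPbd (k + 1)) (div_nonneg (hs k) (hPpos (k + 1)).le)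

/-- Lemma 1: a vector-sequence supermartingale-type convergence result. -/
theorem stmt_2 {d p : ℕ}
    (v : ℕ → Fin d → ℝ) (u : ℕ → Fin p → ℝ)
    (hv0 : ∀ k i, 0 ≤ v k i) (hu0 : ∀ k j, 0 ≤ u k j)
    (V : ℕ → Matrix (Fin d) (Fin d) ℝ) (hV0 : ∀ k i j, 0 ≤ V k i j)
    (C : ℕ → Matrix (Fin d) (Fin p) ℝ)
    (a b : ℕ → ℝ) (ha0 : ∀ k, 0 ≤ a k) (hb0 : ∀ k, 0 ≤ b k)
    (haS : Summable a) (hbS : Summable b)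
    (hrec : ∀ k i, v (k + 1) i ≤
      (∑ j, (V k i j + a k) * v k j) + b k - ∑ j, C k i j * u k j)
    (π : Fin d → ℝ) (hπ : ∀ i, 0 < π i)
    (hπV : ∀ k j, ∑ i, π i * V k i j ≤ π j)
    (hπC : ∀ k j, 0 ≤ ∑ i, π i * C k i j) :
    (∃ l, Tendsto (fun k => ∑ i, π i * v k i) atTop (𝓝 l)) ∧
      (∃ M, ∀ k i, v k i ≤ M) ∧
      Summable (fun k => ∑ i, π i * ∑ j, C k i j * u k j) := by

  set S : ℝ := ∑ i, π i with hSdef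
  set c : ℝ := ∑ j, (π j)⁻¹ with hcdef
  have hS0 : 0 ≤ S := Finset.sum_nonneg (fun i _ => (hπ i).le)
  have hc0 : 0 ≤ c := Finset.sum_nonneg (fun i _ => (inv_nonneg.mpr (hπ i).le))
  set w : ℕ → ℝ := fun k => ∑ i, π i * v k i with hwdef
  set s : ℕ → ℝ := fun k => ∑ i, π i * ∑ j, C k i j * u k j with hsdef
  set α : ℕ → ℝ := fun k => a k * (S * c) with hαdef
  set β : ℕ → ℝ := fun k => b k * S with hβdef
  have hw : ∀ k, 0 ≤ w k := fun k =>
    Finset.sum_nonneg (fun i _ => mul_nonneg (hπ i).le (hv0 k i))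
  have hsswap : ∀ k, s k = ∑ j, (∑ i, π i * C k i j) * u k j := by
    intro k
    simp only [hsdef]
    simp_rw [Finset.mul_sum, Finset.sum_mul, mul_assoc]
    rw [Finset.sum_comm]
  have hs : ∀ k, 0 ≤ s k := by
    intro k
    rw [hsswap k]
    exact Finset.sum_nonneg (fun j _ => mul_nonneg (hπC k j) (hu0 k j))
  have hα : ∀ k, 0 ≤ α k := fun k => mul_nonneg (ha0 k) (mul_nonneg hS0 hc0)
  have hβ : ∀ k, 0 ≤ β k := fun k => mul_nonneg (hb0 k) hS0
  have hαS : Summable α := haS.mul_right _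
  have hβS : Summable β := hbS.mul_right _
  -- single-entry bound
  have hsingle : ∀ k i, v k i ≤ (π i)⁻¹ * w k := by
    intro k i
    have h1 : π i * v k i ≤ w k :=
      Finset.single_le_sum (fun j _ => mul_nonneg (hπ j).le (hv0 k j)) (Finset.mem_univ i)
    have h2 : v k i = (π i)⁻¹ * (π i * v k i) := by
      rw [← mul_assoc, inv_mul_cancel₀ (hπ i).ne', one_mul]
    rw [h2]
    exact mul_le_mul_of_nonneg_left h1 (inv_nonneg.mpr (hπ i).le)
  have hsumv : ∀ k, ∑ j, v k j ≤ c * w k := by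
    intro k
    calc ∑ j, v k j ≤ ∑ j, (π j)⁻¹ * w k := Finset.sum_le_sum (fun j _ => hsingle k j)
      _ = c * w k := by rw [← Finset.sum_mul]
  have hwrec : ∀ k, w (k + 1) ≤ (1 + α k) * w k + β k - s k := by
    intro k
    have step1 : w (k + 1) ≤
        ∑ i, π i * ((∑ j, (V k i j + a k) * v k j) + b k - ∑ j, C k i j * u k j) :=
      Finset.sum_le_sum (fun i _ => mul_le_mul_of_nonneg_left (hrec k i) (hπ i).le)
    have e : ∑ i, π i * ((∑ j, (V k i j + a k) * v k j) + b k - ∑ j, C k i j * u k j)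
        = (∑ i, π i * ∑ j, (V k i j + a k) * v k j) + b k * S - s k := by
      simp only [mul_sub, mul_add]
      rw [Finset.sum_sub_distrib, Finset.sum_add_distrib]
      congr 1
      rw [← Finset.sum_mul, mul_comm]
    have eA : ∑ i, π i * ∑ j, (V k i j + a k) * v k j
        = (∑ j, (∑ i, π i * V k i j) * v k j) + a k * S * ∑ j, v k j := by
      have l1 : ∀ i, π i * ∑ j, (V k i j + a k) * v k j
          = (∑ j, π i * V k i j * v k j) + π i * (a k * ∑ j, v k j) := by
        intro i
        rw [Finset.mul_sum, Finset.mul_sum, Finset.mul_sum, ← Finset.sum_add_distrib]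
        apply Finset.sum_congr rfl
        intro j _
        ring
      simp_rw [l1]
      rw [Finset.sum_add_distrib]
      congr 1
      · rw [Finset.sum_comm]
        apply Finset.sum_congr rfl
        intro j _
        rw [Finset.sum_mul]
      · rw [← Finset.sum_mul]
        ring
    have b1 : ∑ j, (∑ i, π i * V k i j) * v k j ≤ w k :=
      Finset.sum_le_sum (fun j _ => mul_le_mul_of_nonneg_right (hπV k j) (hv0 k j))
    have b2 : a k * S * ∑ j, v k j ≤ α k * w k := by
      calc a k * S * ∑ j, v k j ≤ a k * S * (c * w k) :=
            mul_le_mul_of_nonneg_left (hsumv k) (mul_nonneg (ha0 k) hS0)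
        _ = α k * w k := by simp only [hαdef]; ring
    calc w (k + 1) ≤ (∑ i, π i * ∑ j, (V k i j + a k) * v k j) + b k * S - s k := by
          rw [← e]; exact step1
      _ ≤ (w k + α k * w k) + β k - s k := by rw [eA]; simp only [hβdef]; linarith
      _ = (1 + α k) * w k + β k - s k := by ring
  obtain ⟨⟨l, hl⟩, hsS⟩ := robbins_aux w s α β hw hs hα hβ hαS hβS hwrec
  refine ⟨⟨l, hl⟩, ?_, hsS⟩
  have hbdd : BddAbove (Set.range w) := hl.bddAbove_range
  obtain ⟨Mw, hMw⟩ := hbdd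
  have hMw' : ∀ k, w k ≤ Mw := fun k => hMw ⟨k, rfl⟩
  have hMw0 : 0 ≤ Mw := le_trans (hw 0) (hMw' 0)
  refine ⟨c * Mw, ?_⟩
  intro k i
  calc v k i ≤ (π i)⁻¹ * w k := hsingle k i
    _ ≤ (π i)⁻¹ * Mw := mul_le_mul_of_nonneg_left (hMw' k) (inv_nonneg.mpr (hπ i).le)
    _ ≤ c * Mw := by
        apply mul_le_mul_of_nonneg_right _ hMw0
        exact Finset.single_le_sum (fun j (_ : j ∈ Finset.univ) => inv_nonneg.mpr (hπ j).le)
          (Finset.mem_univ i)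
end

section
/- Let {v^k} ⊂ ℝ^d be a sequence of nonnegative vectors such that v^{k+1} ≤ V^k v^k + b^k 𝟙 holds entrywise for all k ≥ 0, where {V^k} is a sequence of entrywise nonnegative d×d matrices and {b^k} is a nonnegative scalar sequence. Assume there exist a vector π ∈ ℝ^d with all entries positive and a scalar sequence {α^k} with α^k ∈ (0,1), ∑_{k=0}^∞ α^k = ∞, lim_{k→∞} b^k/α^k = 0, and πᵀ V^k ≤ (1 − α^k) πᵀ (entrywise) for all k ≥ 0. Then lim_{k→∞} v^k = 0. -/
open Filter Topology

/-- Lemma 2: a vector-sequence convergence-to-zero result. -/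
theorem stmt_3 {d : ℕ}
    (v : ℕ → Fin d → ℝ) (hv0 : ∀ k i, 0 ≤ v k i)
    (V : ℕ → Matrix (Fin d) (Fin d) ℝ) (hV0 : ∀ k i j, 0 ≤ V k i j)
    (b : ℕ → ℝ) (hb0 : ∀ k, 0 ≤ b k)
    (hrec : ∀ k i, v (k + 1) i ≤ (∑ j, V k i j * v k j) + b k)
    (π : Fin d → ℝ) (hπ : ∀ i, 0 < π i)
    (α : ℕ → ℝ) (hα : ∀ k, α k ∈ Set.Ioo (0 : ℝ) 1)
    (hαdiv : Tendsto (fun n => ∑ k ∈ Finset.range n, α k) atTop atTop)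
    (hbα : Tendsto (fun k => b k / α k) atTop (𝓝 0))
    (hπV : ∀ k j, ∑ i, π i * V k i j ≤ (1 - α k) * π j) :
    ∀ i, Tendsto (fun k => v k i) atTop (𝓝 0) := by
  classical
  set C : ℝ := ∑ i, π i with hC
  have hC0 : 0 ≤ C := Finset.sum_nonneg fun i _ => (hπ i).le
  set s : ℕ → ℝ := fun k => ∑ i, π i * v k i with hs
  have hs0 : ∀ k, 0 ≤ s k := fun k =>
    Finset.sum_nonneg fun i _ => mul_nonneg (hπ i).le (hv0 k i)
  have hsrec : ∀ k, s (k + 1) ≤ (1 - α k) * s k + C * b k := by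
    intro k
    have h1 : s (k + 1) ≤ ∑ i, π i * ((∑ j, V k i j * v k j) + b k) :=
      Finset.sum_le_sum fun i _ => mul_le_mul_of_nonneg_left (hrec k i) (hπ i).le
    have h2 : ∑ i, π i * ((∑ j, V k i j * v k j) + b k)
        = (∑ j, (∑ i, π i * V k i j) * v k j) + C * b k := by
      have : ∀ i : Fin d, π i * ((∑ j, V k i j * v k j) + b k)
          = (∑ j, π i * V k i j * v k j) + π i * b k := by
        intro i
        rw [mul_add, Finset.mul_sum]
        ring_nf
      rw [Finset.sum_congr rfl fun i _ => this i, Finset.sum_add_distrib,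
        Finset.sum_comm]
      congr 1
      · exact Finset.sum_congr rfl fun j _ => by rw [← Finset.sum_mul]
      · rw [hC, ← Finset.sum_mul]
    have h3 : (∑ j, (∑ i, π i * V k i j) * v k j) ≤ ∑ j, ((1 - α k) * π j) * v k j :=
      Finset.sum_le_sum fun j _ => mul_le_mul_of_nonneg_right (hπV k j) (hv0 k j)
    have h4 : ∑ j, ((1 - α k) * π j) * v k j = (1 - α k) * s k := by
      rw [hs, Finset.mul_sum]
      exact Finset.sum_congr rfl fun j _ => by ring
    calc s (k + 1) ≤ (∑ j, (∑ i, π i * V k i j) * v k j) + C * b k := by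
            rw [← h2]; exact h1
      _ ≤ (∑ j, ((1 - α k) * π j) * v k j) + C * b k := by linarith
      _ = (1 - α k) * s k + C * b k := by rw [h4]
  -- main convergence of s
  have hstend : Tendsto s atTop (𝓝 0) := by
    rw [Metric.tendsto_atTop]
    intro ε hε
    set e : ℝ := ε / 2 with he
    have he0 : 0 < e := by positivity
    -- eventually C * b k ≤ α k * (e / 2)
    have hev : ∀ᶠ k in atTop, C * b k ≤ α k * (e / 2) := by
      have h : ∀ᶠ k in atTop, b k / α k < (e / 2) / (C + 1) := by
        refine hbα.eventually_lt_const ?_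
        positivity
      filter_upwards [h] with k hk
      have hαk := hα k
      have hbk : b k < α k * ((e / 2) / (C + 1)) := by
        have := (div_lt_iff₀ hαk.1).mp hk
        linarith
      have h1 : C * b k ≤ (C + 1) * b k := by nlinarith [hb0 k]
      have h2 : (C + 1) * b k ≤ (C + 1) * (α k * ((e / 2) / (C + 1))) := by
        nlinarith [hC0]
      have h3 : (C + 1) * (α k * ((e / 2) / (C + 1))) = α k * (e / 2) := by
        field_simp
      linarith
    obtain ⟨N, hN⟩ := eventually_atTop.mp hev
    set u : ℕ → ℝ := fun k => max (s k - e) 0 with hu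
    have hu0 : ∀ k, 0 ≤ u k := fun k => le_max_right _ _
    have hustep : ∀ k, N ≤ k → u (k + 1) ≤ (1 - α k) * u k := by
      intro k hk
      have hαk := hα k
      have h1 : 0 ≤ 1 - α k := by linarith [hαk.2]
      have h2 : 0 ≤ (1 - α k) * u k := mul_nonneg h1 (hu0 k)
      have h3 : s k - e ≤ u k := le_max_left _ _
      have h4 : s (k + 1) - e ≤ (1 - α k) * u k := by
        have := hsrec k
        have hb := hN k hk
        nlinarith [hαk.1]
      exact max_le h4 h2
    set T : ℕ → ℝ := fun n => ∑ j ∈ Finset.range n, α (N + j) with hT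
    set P : ℕ → ℝ := fun n => ∏ j ∈ Finset.range n, (1 - α (N + j)) with hP
    have hP0 : ∀ n, 0 ≤ P n := fun n =>
      Finset.prod_nonneg fun j _ => by linarith [(hα (N + j)).2]
    have hPexp : ∀ n, P n ≤ Real.exp (-(T n)) := by
      intro n
      have : P n ≤ ∏ j ∈ Finset.range n, Real.exp (-(α (N + j))) := by
        refine Finset.prod_le_prod (fun j _ => by linarith [(hα (N + j)).2]) ?_
        intro j _
        have := Real.add_one_le_exp (-(α (N + j)))
        linarith
      calc P n ≤ ∏ j ∈ Finset.range n, Real.exp (-(α (N + j))) := this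
        _ = Real.exp (∑ j ∈ Finset.range n, -(α (N + j))) := (Real.exp_sum _ _).symm
        _ = Real.exp (-(T n)) := by rw [hT]; simp [Finset.sum_neg_distrib]
    have hTdiv : Tendsto T atTop atTop := by
      have key : ∀ n, T n = (∑ k ∈ Finset.range (N + n), α k) - ∑ k ∈ Finset.range N, α k := by
        intro n
        rw [Finset.sum_range_add]
        ring
      have h1 : Tendsto (fun n => ∑ k ∈ Finset.range (N + n), α k) atTop atTop := by
        refine hαdiv.comp ?_
        exact tendsto_atTop_mono (fun n => Nat.le_add_left n N) tendsto_id
      have h2 := tendsto_atTop_add_const_right atTop (-(∑ k ∈ Finset.range N, α k)) h1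
      refine h2.congr fun n => ?_
      rw [key n]; ring
    have hexp0 : Tendsto (fun n => Real.exp (-(T n))) atTop (𝓝 0) :=
      Real.tendsto_exp_atBot.comp (tendsto_neg_atBot_iff.mpr hTdiv)
    have hub : ∀ n, u (N + n) ≤ u N * P n := by
      intro n
      induction n with
      | zero => simp [hP]
      | succ n ih =>
        have hαk := hα (N + n)
        have h1 : 0 ≤ 1 - α (N + n) := by linarith [hαk.2]
        calc u (N + (n + 1)) = u ((N + n) + 1) := by ring_nf
          _ ≤ (1 - α (N + n)) * u (N + n) := hustep (N + n) (Nat.le_add_right N n)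
          _ ≤ (1 - α (N + n)) * (u N * P n) := by
              exact mul_le_mul_of_nonneg_left ih h1
          _ = u N * P (n + 1) := by
              rw [hP]; simp only [Finset.prod_range_succ]; ring
    have hmul0 : Tendsto (fun n => u N * Real.exp (-(T n))) atTop (𝓝 0) := by
      have := hexp0.const_mul (u N)
      simpa using this
    have hlt : ∀ᶠ n in atTop, u N * Real.exp (-(T n)) < e :=
      hmul0.eventually_lt_const he0
    obtain ⟨n0, hn0⟩ := eventually_atTop.mp hlt
    refine ⟨N + n0, fun k hk => ?_⟩
    have hkN : N ≤ k := le_trans (Nat.le_add_right N n0) hk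
    obtain ⟨n, rfl⟩ := Nat.exists_eq_add_of_le hkN
    have hn : n0 ≤ n := by omega
    have h1 : u (N + n) ≤ u N * P n := hub n
    have h2 : u N * P n ≤ u N * Real.exp (-(T n)) :=
      mul_le_mul_of_nonneg_left (hPexp n) (hu0 N)
    have h3 : u N * Real.exp (-(T n)) < e := hn0 n hn
    have h4 : s (N + n) - e ≤ u (N + n) := le_max_left _ _
    have : s (N + n) < ε := by
      have : s (N + n) ≤ e + u (N + n) := by linarith
      rw [he] at *
      linarith
    rw [Real.dist_eq, sub_zero, abs_of_nonneg (hs0 _)]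
    exact this
  -- conclude per coordinate
  intro i
  have hbound : ∀ k, v k i ≤ s k / π i := by
    intro k
    rw [le_div_iff₀ (hπ i)]
    have : π i * v k i ≤ s k :=
      Finset.single_le_sum (f := fun j => π j * v k j)
        (fun j _ => mul_nonneg (hπ j).le (hv0 k j)) (Finset.mem_univ i)
    linarith
  have hdiv : Tendsto (fun k => s k / π i) atTop (𝓝 0) := by
    have := hstend.div_const (π i)
    simpa using this
  exact squeeze_zero (fun k => hv0 k i) hbound hdiv
end

section
/- Let F : ℝ^d → ℝ be continuously differentiable and attain its minimum at some θ*. Suppose sequences {x_i^k}, {y_i^k} ⊆ ℝ^d (i = 1,…,m), with averages x̄^k = (1/m)∑_i x_i^k and ȳ^k = (1/m)∑_i y_i^k, satisfy for all k ≥ 0 the entrywise inequality v^{k+1} ≤ (V + a^k 𝟙𝟙ᵀ) v^k + b^k 𝟙 − C^k [‖∇F(x̄^k)‖²; ‖ȳ^k‖²], where ν > 0, v^k := [ν(F(x̄^k) − F(θ*)); ∑_{i=1}^m ‖x_i^k − x̄^k‖²; ∑_{i=1}^m ‖y_i^k − ȳ^k‖²], V is the 3×3 matrix with rows (1, 1−η,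 0), (0, η, 1/(1−η)), (0, (1−η)²(1−c)(1−δ), c), and C^k is the 3×2 matrix with rows (γ^k, (1−τ^k)/τ^k), (0, 0), (0, −(1−η)²(1−c)), with constants η, c, δ ∈ (0,1) and nonnegative scalar sequences {a^k}, {b^k}, {τ^k}, {γ^k} satisfying τ^k ∈ (0,1), ((1−τ^k)/τ^k)·δ ≥ 1 for all k, ∑_{k=0}^∞ a^k < ∞ and ∑_{k=0}^∞ b^k < ∞. Then lim_{k→∞} F(x̄^k) exists, and lim_{k→∞} ‖ȳ^k‖ = lim_{k→∞} ‖x_i^k − x̄^k‖ = lim_{k→∞} ‖y_i^k − ȳ^k‖ = 0 for all i. -/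
open Filter Topology Finset Set


lemma aux_sqrt {f : ℕ → ℝ} (hf : ∀ k, 0 ≤ f k)
    (h : Tendsto (fun k => f k ^ 2) atTop (𝓝 0)) : Tendsto f atTop (𝓝 0) := by
  have h1 : Tendsto (fun k => Real.sqrt (f k ^ 2)) atTop (𝓝 (Real.sqrt 0)) :=
    (Real.continuous_sqrt.tendsto 0).comp h
  simp only [Real.sqrt_zero] at h1
  exact h1.congr fun k => Real.sqrt_sq (hf k)

lemma aux_RS {u e a b : ℕ → ℝ} (hu : ∀ k, 0 ≤ u k) (he : ∀ k, 0 ≤ e k)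
    (ha : ∀ k, 0 ≤ a k) (hb : ∀ k, 0 ≤ b k) (haS : Summable a) (hbS : Summable b)
    (hrec : ∀ k, u (k+1) + e k ≤ (1 + a k) * u k + b k) :
    (∃ l, Tendsto u atTop (𝓝 l)) ∧ Tendsto e atTop (𝓝 0) := by
  set P : ℕ → ℝ := fun k => ∏ j ∈ range k, (1 + a j) with hP
  have hP1 : ∀ k, 1 ≤ P k := by
    intro k
    show (1:ℝ) ≤ ∏ j ∈ range k, (1 + a j)
    have := Finset.prod_le_prod (s := range k) (f := fun _ => (1:ℝ)) (g := fun j => 1 + a j)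
      (fun j _ => zero_le_one) (fun j _ => by show (1:ℝ) ≤ 1 + a j; linarith [ha j])
    simpa using this
  have hPpos : ∀ k, 0 < P k := fun k => lt_of_lt_of_le one_pos (hP1 k)
  have hPsucc : ∀ k, P (k+1) = P k * (1 + a k) := fun k => Finset.prod_range_succ _ k
  have hPmono : Monotone P := monotone_nat_of_le_succ fun k => by
    rw [hPsucc]; nlinarith [hPpos k, ha k]
  have hPbdd : ∀ k, P k ≤ Real.exp (∑' j, a j) := by
    intro k
    calc P k ≤ ∏ j ∈ range k, Real.exp (a j) := by
          apply Finset.prod_le_prod (fun j _ => by have := ha j; positivity)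
          intro j _
          have := Real.add_one_le_exp (a j); linarith
      _ = Real.exp (∑ j ∈ range k, a j) := by rw [Real.exp_sum]
      _ ≤ Real.exp (∑' j, a j) := by
          apply Real.exp_le_exp.2
          exact Summable.sum_le_tsum _ (fun j _ => ha j) haS
  -- step inequality for u/P
  have hstep : ∀ k, u (k+1) / P (k+1) ≤ u k / P k + b k := by
    intro k
    rw [div_le_iff₀ (hPpos (k+1))]
    have h1 : u (k+1) ≤ (1 + a k) * u k + b k := by linarith [hrec k, he k]
    have h2 : (u k / P k + b k) * P (k+1) = u k * (1 + a k) + b k * P (k+1) := by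
      have h0 : P k ≠ 0 := (hPpos k).ne'
      rw [hPsucc]
      field_simp
    have h3 : b k ≤ b k * P (k+1) := le_mul_of_one_le_right (hb k) (hP1 (k+1))
    rw [h2]; nlinarith
  set q : ℕ → ℝ := fun k => u k / P k - ∑ j ∈ range k, b j with hq
  have hqanti : Antitone q := antitone_nat_of_succ_le fun k => by
    have := hstep k
    have hs : ∑ j ∈ range (k+1), b j = ∑ j ∈ range k, b j + b k :=
      Finset.sum_range_succ _ k
    show u (k+1) / P (k+1) - ∑ j ∈ range (k+1), b j ≤ u k / P k - ∑ j ∈ range k, b j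
    rw [hs]; linarith
  have hqbdd : BddBelow (Set.range q) := by
    refine ⟨-(∑' j, b j), ?_⟩
    rintro _ ⟨k, rfl⟩
    have h1 : 0 ≤ u k / P k := div_nonneg (hu k) (hPpos k).le
    have h2 : ∑ j ∈ range k, b j ≤ ∑' j, b j := Summable.sum_le_tsum _ (fun j _ => hb j) hbS
    show -(∑' j, b j) ≤ u k / P k - ∑ j ∈ range k, b j
    linarith
  have hqlim : Tendsto q atTop (𝓝 (⨅ i, q i)) := tendsto_atTop_ciInf hqanti hqbdd
  have hBlim : Tendsto (fun k => ∑ j ∈ range k, b j) atTop (𝓝 (∑' j, b j)) :=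
    hbS.hasSum.tendsto_sum_nat
  have hUPlim : Tendsto (fun k => u k / P k) atTop (𝓝 ((⨅ i, q i) + ∑' j, b j)) := by
    have := hqlim.add hBlim
    refine this.congr fun k => ?_
    show u k / P k - ∑ j ∈ range k, b j + ∑ j ∈ range k, b j = u k / P k
    ring
  have hPlim : Tendsto P atTop (𝓝 (⨆ i, P i)) := by
    apply tendsto_atTop_ciSup hPmono
    exact ⟨Real.exp (∑' j, a j), by rintro _ ⟨k, rfl⟩; exact hPbdd k⟩
  have hulim : Tendsto u atTop (𝓝 (((⨅ i, q i) + ∑' j, b j) * (⨆ i, P i))) := by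
    have := hUPlim.mul hPlim
    refine this.congr fun k => ?_
    exact div_mul_cancel₀ _ (hPpos k).ne'
  -- u bounded
  obtain ⟨M, hM⟩ := hulim.bddAbove_range
  have hM' : ∀ k, u k ≤ M := fun k => hM ⟨k, rfl⟩
  -- summable e
  have heS : Summable e := by
    apply summable_of_sum_range_le he
    intro n
    show ∑ k ∈ range n, e k ≤ u 0 + (∑' k, a k) * M + ∑' k, b k
    have h1 : ∀ k, e k ≤ (u k - u (k+1)) + a k * M + b k := by
      intro k
      have h2 : a k * u k ≤ a k * M := mul_le_mul_of_nonneg_left (hM' k) (ha k)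
      have := hrec k
      nlinarith
    calc ∑ k ∈ range n, e k ≤ ∑ k ∈ range n, ((u k - u (k+1)) + a k * M + b k) :=
          Finset.sum_le_sum fun k _ => h1 k
      _ = (u 0 - u n) + (∑ k ∈ range n, a k) * M + ∑ k ∈ range n, b k := by
          rw [Finset.sum_add_distrib, Finset.sum_add_distrib, Finset.sum_range_sub' u n,
            Finset.sum_mul]
      _ ≤ u 0 + (∑' k, a k) * M + ∑' k, b k := by
          have h3 : ∑ k ∈ range n, a k ≤ ∑' k, a k := Summable.sum_le_tsum _ (fun j _ => ha j) haS
          have h4 : ∑ k ∈ range n, b k ≤ ∑' k, b k := Summable.sum_le_tsum _ (fun j _ => hb j) hbS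
          have h5 : 0 ≤ u n := hu n
          have hM0 : 0 ≤ M := le_trans (hu 0) (hM' 0)
          nlinarith
  exact ⟨⟨_, hulim⟩, heS.tendsto_atTop_zero⟩


lemma aux_key {η c δ : ℝ} (hη : η ∈ Set.Ioo (0:ℝ) 1) (hc : c ∈ Set.Ioo (0:ℝ) 1)
    (hδ : δ ∈ Set.Ioo (0:ℝ) 1) :
    ∃ w2 w3 ε1 ε2 ε3 : ℝ, 0 < w2 ∧ 0 < w3 ∧ 0 < ε1 ∧ 0 < ε2 ∧ 0 < ε3 ∧
      ∀ r A X Y N G gk ak bk A' X' Y' : ℝ, 0 ≤ A → 0 ≤ X → 0 ≤ Y → 0 ≤ N → 0 ≤ G →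
        0 ≤ gk → 0 ≤ ak → 1/δ ≤ r →
        A' ≤ (1 + ak) * A + ((1 - η) + ak) * X + (0 + ak) * Y + bk - (gk * G + r * N) →
        X' ≤ (0 + ak) * A + (η + ak) * X + (1/(1-η) + ak) * Y + bk - (0 * G + 0 * N) →
        Y' ≤ (0 + ak) * A + ((1-η)^2*(1-c)*(1-δ) + ak) * X + (c + ak) * Y + bk
          - (0 * G + (-((1-η)^2*(1-c))) * N) →
        A' + w2 * X' + w3 * Y' + (ε1 * X + ε2 * Y + ε3 * N) ≤
          (1 + (1 + w2 + w3) * ak) * (A + w2 * X + w3 * Y) + (1 + w2 + w3) * bk := by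
  obtain ⟨hη0, hη1⟩ := hη
  obtain ⟨hc0, hc1⟩ := hc
  obtain ⟨hδ0, hδ1⟩ := hδ
  have hu : (0:ℝ) < 1 - η := by linarith
  have hv : (0:ℝ) < 1 - c := by linarith
  have hu' : (1 - η) ≠ 0 := hu.ne'
  have hv' : (1 - c) ≠ 0 := hv.ne'
  have hδ' : δ ≠ 0 := hδ0.ne'
  set w2 : ℝ := ((1 + (2 - η) * (1 - δ) / (2 * (1 - η) * δ)) + (2 - η) / (2 * (1 - η) * δ)) / 2
    with hw2def
  set w3 : ℝ := (2 - η) / (2 * (1 - η)^2 * (1 - c) * δ) with hw3def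
  have hw2one : 1 ≤ w2 := by
    rw [hw2def]
    have h1 : 1 ≤ (2 - η) / (2 * (1 - η) * δ) := by
      rw [le_div_iff₀ (by positivity)]
      nlinarith
    have h2 : 0 ≤ (2 - η) * (1 - δ) / (2 * (1 - η) * δ) :=
      div_nonneg (by nlinarith) (by positivity)
    linarith
  have hw3one : 1 ≤ w3 := by
    rw [hw3def, le_div_iff₀ (by positivity)]
    nlinarith [sq_nonneg (1 - η), mul_pos hu hv, mul_pos (mul_pos hu hv) hδ0,
      mul_pos hu hδ0]
  have hw2pos : 0 < w2 := lt_of_lt_of_le one_pos hw2one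
  have hw3pos : 0 < w3 := lt_of_lt_of_le one_pos hw3one
  have e1 : (1 - η) + w2 * η + w3 * ((1-η)^2*(1-c)*(1-δ)) + η/4 = w2 := by
    rw [hw2def, hw3def]; field_simp; ring
  have e2 : w2 * (1/(1-η)) + w3 * c + η/(4*(1-η)^2) = w3 := by
    rw [hw2def, hw3def]; field_simp; ring
  have e3 : w3 * ((1-η)^2*(1-c)) + η/(2*δ) = 1/δ := by
    rw [hw3def]; field_simp; ring
  refine ⟨w2, w3, η/4, η/(4*(1-η)^2), η/(2*δ), hw2pos, hw3pos, by linarith, by positivity,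
    by positivity, ?_⟩
  intro r A X Y N G gk ak bk A' X' Y' hA hX hY hN hG hgk hak hr h1 h2 h3
  have h2' := mul_le_mul_of_nonneg_left h2 hw2pos.le
  have h3' := mul_le_mul_of_nonneg_left h3 hw3pos.le
  have hs1 : 0 ≤ gk * G := mul_nonneg hgk hG
  have hs2 : 0 ≤ (r - 1/δ) * N := mul_nonneg (by linarith) hN
  have hs3 : 0 ≤ (1 + w2 + w3) * ak * (w2 - 1) * X := by
    apply mul_nonneg _ hX
    apply mul_nonneg (mul_nonneg (by linarith) hak) (by linarith)
  have hs4 : 0 ≤ (1 + w2 + w3) * ak * (w3 - 1) * Y := by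
    apply mul_nonneg _ hY
    apply mul_nonneg (mul_nonneg (by linarith) hak) (by linarith)
  have hkey : ((1 + ak) * A + ((1 - η) + ak) * X + (0 + ak) * Y + bk - (gk * G + r * N))
      + w2 * ((0 + ak) * A + (η + ak) * X + (1/(1-η) + ak) * Y + bk - (0 * G + 0 * N))
      + w3 * ((0 + ak) * A + ((1-η)^2*(1-c)*(1-δ) + ak) * X + (c + ak) * Y + bk
          - (0 * G + (-((1-η)^2*(1-c))) * N))
      + (η/4 * X + η/(4*(1-η)^2) * Y + η/(2*δ) * N)
      + gk * G + (r - 1/δ) * N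
      + (1 + w2 + w3) * ak * (w2 - 1) * X + (1 + w2 + w3) * ak * (w3 - 1) * Y
      = (1 + (1 + w2 + w3) * ak) * (A + w2 * X + w3 * Y) + (1 + w2 + w3) * bk := by
    linear_combination X * e1 + Y * e2 + N * e3
  linarith

set_option maxHeartbeats 2000000 in
/-- Proposition 2(a). -/
theorem stmt_4 {d m : ℕ} (hm : 0 < m)
    (F : EuclideanSpace ℝ (Fin d) → ℝ)
    (hFC1 : ContDiff ℝ 1 F)
    (θs : EuclideanSpace ℝ (Fin d)) (hθs : ∀ y, F θs ≤ F y)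
    (x y : ℕ → Fin m → EuclideanSpace ℝ (Fin d))
    (xbar ybar : ℕ → EuclideanSpace ℝ (Fin d))
    (hxbar : ∀ k, xbar k = (1 / (m : ℝ)) • ∑ i, x k i)
    (hybar : ∀ k, ybar k = (1 / (m : ℝ)) • ∑ i, y k i)
    (ν : ℝ) (hν : 0 < ν)
    (η c δ : ℝ)
    (hη : η ∈ Set.Ioo (0 : ℝ) 1) (hc : c ∈ Set.Ioo (0 : ℝ) 1) (hδ : δ ∈ Set.Ioo (0 : ℝ) 1)
    (a b τ γ : ℕ → ℝ)
    (ha0 : ∀ k, 0 ≤ a k) (hb0 : ∀ k, 0 ≤ b k) (hγ0 : ∀ k, 0 ≤ γ k)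
    (hτ : ∀ k, τ k ∈ Set.Ioo (0 : ℝ) 1)
    (hτδ : ∀ k, 1 ≤ ((1 - τ k) / τ k) * δ)
    (haS : Summable a) (hbS : Summable b)
    (hrec1 : ∀ k, ν * (F (xbar (k + 1)) - F θs) ≤
      (1 + a k) * (ν * (F (xbar k) - F θs))
        + ((1 - η) + a k) * (∑ i, ‖x k i - xbar k‖ ^ 2)
        + (0 + a k) * (∑ i, ‖y k i - ybar k‖ ^ 2)
        + b k
        - (γ k * ‖gradient F (xbar k)‖ ^ 2 + ((1 - τ k) / τ k) * ‖ybar k‖ ^ 2))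
    (hrec2 : ∀ k, (∑ i, ‖x (k + 1) i - xbar (k + 1)‖ ^ 2) ≤
      (0 + a k) * (ν * (F (xbar k) - F θs))
        + (η + a k) * (∑ i, ‖x k i - xbar k‖ ^ 2)
        + (1 / (1 - η) + a k) * (∑ i, ‖y k i - ybar k‖ ^ 2)
        + b k
        - (0 * ‖gradient F (xbar k)‖ ^ 2 + 0 * ‖ybar k‖ ^ 2))
    (hrec3 : ∀ k, (∑ i, ‖y (k + 1) i - ybar (k + 1)‖ ^ 2) ≤
      (0 + a k) * (ν * (F (xbar k) - F θs))
        + ((1 - η) ^ 2 * (1 - c) * (1 - δ) + a k) * (∑ i, ‖x k i - xbar k‖ ^ 2)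
        + (c + a k) * (∑ i, ‖y k i - ybar k‖ ^ 2)
        + b k
        - (0 * ‖gradient F (xbar k)‖ ^ 2 + (-((1 - η) ^ 2 * (1 - c))) * ‖ybar k‖ ^ 2)) :
    (∃ l, Tendsto (fun k => F (xbar k)) atTop (𝓝 l)) ∧
      Tendsto (fun k => ‖ybar k‖) atTop (𝓝 0) ∧
      (∀ i, Tendsto (fun k => ‖x k i - xbar k‖) atTop (𝓝 0)) ∧
      (∀ i, Tendsto (fun k => ‖y k i - ybar k‖) atTop (𝓝 0)) := by
  obtain ⟨w2, w3, ε1, ε2, ε3, hw2, hw3, hε1, hε2, hε3, hkey⟩ := aux_key hη hc hδ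
  set A : ℕ → ℝ := fun k => ν * (F (xbar k) - F θs) with hAdef
  set X : ℕ → ℝ := fun k => ∑ i, ‖x k i - xbar k‖ ^ 2 with hXdef
  set Y : ℕ → ℝ := fun k => ∑ i, ‖y k i - ybar k‖ ^ 2 with hYdef
  set N : ℕ → ℝ := fun k => ‖ybar k‖ ^ 2 with hNdef
  have hAnn : ∀ k, 0 ≤ A k := fun k => mul_nonneg hν.le (by linarith [hθs (xbar k)])
  have hXnn : ∀ k, 0 ≤ X k := fun k => Finset.sum_nonneg fun i _ => sq_nonneg _
  have hYnn : ∀ k, 0 ≤ Y k := fun k => Finset.sum_nonneg fun i _ => sq_nonneg _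
  have hNnn : ∀ k, 0 ≤ N k := fun k => sq_nonneg _
  have hr : ∀ k, 1/δ ≤ (1 - τ k) / τ k := by
    intro k
    rw [div_le_iff₀ hδ.1]
    exact hτδ k
  have hrecW : ∀ k, (fun k => A k + w2 * X k + w3 * Y k) (k+1)
      + (fun k => ε1 * X k + ε2 * Y k + ε3 * N k) k
      ≤ (1 + (fun k => (1 + w2 + w3) * a k) k) * (fun k => A k + w2 * X k + w3 * Y k) k
        + (fun k => (1 + w2 + w3) * b k) k := by
    intro k
    have := hkey ((1 - τ k) / τ k) (A k) (X k) (Y k) (N k)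
      (‖gradient F (xbar k)‖ ^ 2) (γ k) (a k) (b k) (A (k+1)) (X (k+1)) (Y (k+1))
      (hAnn k) (hXnn k) (hYnn k) (hNnn k) (sq_nonneg _) (hγ0 k) (ha0 k) (hr k)
      (hrec1 k) (hrec2 k) (hrec3 k)
    simpa using this
  have hunn : ∀ k, 0 ≤ A k + w2 * X k + w3 * Y k := by
    intro k
    have h1 := mul_nonneg hw2.le (hXnn k)
    have h2 := mul_nonneg hw3.le (hYnn k)
    linarith [hAnn k]
  have henn : ∀ k, 0 ≤ ε1 * X k + ε2 * Y k + ε3 * N k := by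
    intro k
    have h1 := mul_nonneg hε1.le (hXnn k)
    have h2 := mul_nonneg hε2.le (hYnn k)
    have h3 := mul_nonneg hε3.le (hNnn k)
    linarith
  have hann : ∀ k, 0 ≤ (1 + w2 + w3) * a k := fun k => mul_nonneg (by linarith) (ha0 k)
  have hbnn : ∀ k, 0 ≤ (1 + w2 + w3) * b k := fun k => mul_nonneg (by linarith) (hb0 k)
  have haS' : Summable (fun k => (1 + w2 + w3) * a k) := haS.mul_left _
  have hbS' : Summable (fun k => (1 + w2 + w3) * b k) := hbS.mul_left _
  obtain ⟨⟨l, hWlim⟩, hElim⟩ := aux_RS hunn henn hann hbnn haS' hbS' hrecW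
  have hXlim : Tendsto X atTop (𝓝 0) := by
    apply squeeze_zero hXnn (g := fun k => (ε1 * X k + ε2 * Y k + ε3 * N k) / ε1)
    · intro k
      rw [le_div_iff₀ hε1]
      nlinarith [mul_nonneg hε2.le (hYnn k), mul_nonneg hε3.le (hNnn k)]
    · simpa using hElim.div_const ε1
  have hYlim : Tendsto Y atTop (𝓝 0) := by
    apply squeeze_zero hYnn (g := fun k => (ε1 * X k + ε2 * Y k + ε3 * N k) / ε2)
    · intro k
      rw [le_div_iff₀ hε2]
      nlinarith [mul_nonneg hε1.le (hXnn k), mul_nonneg hε3.le (hNnn k)]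
    · simpa using hElim.div_const ε2
  have hNlim : Tendsto N atTop (𝓝 0) := by
    apply squeeze_zero hNnn (g := fun k => (ε1 * X k + ε2 * Y k + ε3 * N k) / ε3)
    · intro k
      rw [le_div_iff₀ hε3]
      nlinarith [mul_nonneg hε1.le (hXnn k), mul_nonneg hε2.le (hYnn k)]
    · simpa using hElim.div_const ε3
  have hAlim : Tendsto A atTop (𝓝 (l - w2 * 0 - w3 * 0)) := by
    have := (hWlim.sub (hXlim.const_mul w2)).sub (hYlim.const_mul w3)
    refine this.congr fun k => ?_
    show A k + w2 * X k + w3 * Y k - w2 * X k - w3 * Y k = A k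
    ring
  refine ⟨⟨(l - w2 * 0 - w3 * 0) / ν + F θs, ?_⟩, ?_, ?_, ?_⟩
  · have := (hAlim.div_const ν).add (tendsto_const_nhds (x := F θs))
    refine this.congr fun k => ?_
    show ν * (F (xbar k) - F θs) / ν + F θs = F (xbar k)
    field_simp
    ring
  · exact aux_sqrt (fun k => norm_nonneg _) hNlim
  · intro i
    apply aux_sqrt (fun k => norm_nonneg _)
    apply squeeze_zero (fun k => sq_nonneg _) (g := X) _ hXlim
    intro k
    exact Finset.single_le_sum (f := fun i => ‖x k i - xbar k‖ ^ 2)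
      (fun i _ => sq_nonneg _) (Finset.mem_univ i)
  · intro i
    apply aux_sqrt (fun k => norm_nonneg _)
    apply squeeze_zero (fun k => sq_nonneg _) (g := Y) _ hYlim
    intro k
    exact Finset.single_le_sum (f := fun i => ‖y k i - ybar k‖ ^ 2)
      (fun i _ => sq_nonneg _) (Finset.mem_univ i)
end

section
/- Let f_i : ℝ^d → ℝ (i = 1,…,m) be convex with L-Lipschitz continuous gradients, F = (1/m)∑_i f_i, and let θ* satisfy ∇F(θ*) = 0. Then for every x ∈ ℝ^d: (i) ∑_{i=1}^m ‖∇f_i(θ*) − ∇f_i(x)‖² ≤ 2mL (F(x) − F(θ*)), and consequently (ii) ∑_{i=1}^m ‖∇f_i(x)‖² ≤ 4mL (F(x) − F(θ*)) + 2 ∑_{i=1}^m ‖∇f_i(θ*)‖². -/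
open Filter Topology

section Helpers

open InnerProductSpace Set

variable {E : Type*} [NormedAddCommGroup E] [InnerProductSpace ℝ E] [CompleteSpace E]

private theorem hasGradientAt_inner' (a x : E) : HasGradientAt (fun u => ⟪a, u⟫_ℝ) a x := by
  rw [hasGradientAt_iff_hasFDerivAt]
  exact (toDual ℝ E a).hasFDerivAt

private theorem HasGradientAt.sub' {f g : E → ℝ} {a b x : E} (hf : HasGradientAt f a x)
    (hg : HasGradientAt g b x) : HasGradientAt (fun u => f u - g u) (a - b) x := by
  rw [hasGradientAt_iff_hasFDerivAt] at *
  rw [map_sub]; exact hf.fun_sub hg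

private theorem hasDerivAt_line' {f : E → ℝ} {g : E → E} (hg : ∀ u, HasGradientAt f (g u) u)
    (x v : E) (t : ℝ) :
    HasDerivAt (fun s : ℝ => f (x + s • v)) ⟪g (x + t • v), v⟫_ℝ t := by
  have hline : HasDerivAt (fun s : ℝ => x + s • v) v t := by
    simpa using ((hasDerivAt_id t).smul_const v).const_add x
  have hf : HasFDerivAt f (toDual ℝ E (g (x + t • v))) (x + t • v) :=
    hasGradientAt_iff_hasFDerivAt.mp (hg _)
  simpa [Function.comp_def] using hf.comp_hasDerivAt t hline

/-- Descent lemma for functions with Lipschitz gradient. -/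
private theorem descent_lemma {L : ℝ} (hL : 0 < L) {f : E → ℝ} {g : E → E}
    (hg : ∀ u, HasGradientAt f (g u) u)
    (hLip : ∀ u v, ‖g u - g v‖ ≤ L * ‖u - v‖) (x y : E) :
    f y ≤ f x + ⟪g x, y - x⟫_ℝ + L / 2 * ‖y - x‖ ^ 2 := by
  set v := y - x with hv
  set G : ℝ → ℝ := fun t => f (x + t • v) - t * ⟪g x, v⟫_ℝ - L / 2 * t ^ 2 * ‖v‖ ^ 2 with hG
  have hG' : ∀ t : ℝ, HasDerivAt G
      (⟪g (x + t • v), v⟫_ℝ - ⟪g x, v⟫_ℝ - L * t * ‖v‖ ^ 2) t := by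
    intro t
    have h1 := hasDerivAt_line' hg x v t
    have h2 : HasDerivAt (fun s : ℝ => s * ⟪g x, v⟫_ℝ) ⟪g x, v⟫_ℝ t := by
      simpa using (hasDerivAt_id t).mul_const (⟪g x, v⟫_ℝ)
    have h3 : HasDerivAt (fun s : ℝ => L / 2 * s ^ 2 * ‖v‖ ^ 2) (L * t * ‖v‖ ^ 2) t := by
      have := ((hasDerivAt_pow 2 t).const_mul (L / 2)).mul_const (‖v‖ ^ 2)
      exact this.congr_deriv (by rw [show (2:ℕ) - 1 = 1 from rfl]; push_cast; ring)
    exact (h1.sub h2).sub h3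
  have hanti : AntitoneOn G (Icc 0 1) := by
    apply antitoneOn_of_deriv_nonpos (convex_Icc 0 1)
    · exact fun t _ => ((hG' t).differentiableAt).continuousAt.continuousWithinAt
    · exact fun t _ => ((hG' t).differentiableAt).differentiableWithinAt
    · intro t ht
      rw [interior_Icc] at ht
      rw [(hG' t).deriv]
      have h1 : ⟪g (x + t • v) - g x, v⟫_ℝ ≤ ‖g (x + t • v) - g x‖ * ‖v‖ :=
        real_inner_le_norm _ _
      have h2 : ‖g (x + t • v) - g x‖ ≤ L * (t * ‖v‖) := by
        have := hLip (x + t • v) x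
        simpa [norm_smul, abs_of_pos ht.1, mul_assoc] using this
      have h3 : ⟪g (x + t • v), v⟫_ℝ - ⟪g x, v⟫_ℝ = ⟪g (x + t • v) - g x, v⟫_ℝ := by
        rw [inner_sub_left]
      rw [h3]
      nlinarith [h1, mul_le_mul_of_nonneg_right h2 (norm_nonneg v)]
  have := hanti (left_mem_Icc.mpr zero_le_one) (right_mem_Icc.mpr zero_le_one) zero_le_one
  simp only [hG, zero_smul, add_zero, one_smul, one_pow, zero_pow, mul_zero, zero_mul,
    mul_one, sub_zero] at this
  have hy : x + v = y := by rw [hv]; abel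
  rw [hy] at this
  linarith

/-- First-order condition for convexity. -/
private theorem first_order' {f : E → ℝ} {g : E → E} (hconv : ConvexOn ℝ univ f)
    (hg : ∀ u, HasGradientAt f (g u) u) (x u : E) :
    f x + ⟪g x, u - x⟫_ℝ ≤ f u := by
  set v := u - x with hv
  have hφ : ConvexOn ℝ univ (fun t : ℝ => f (x + t • v)) := by
    have := hconv.comp_affineMap (AffineMap.lineMap x u : ℝ →ᵃ[ℝ] E)
    have he : (fun t : ℝ => f (x + t • v)) = f ∘ (AffineMap.lineMap x u : ℝ →ᵃ[ℝ] E) := by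
      funext t
      simp only [Function.comp, AffineMap.lineMap_apply_module, hv]
      congr 1
      module
    rw [he]
    simpa using this
  have hd := hasDerivAt_line' hg x v 0
  simp only [zero_smul, add_zero] at hd
  have := hφ.le_slope_of_hasDerivAt (mem_univ (0:ℝ)) (mem_univ (1:ℝ)) zero_lt_one hd
  rw [slope_def_field] at this
  simp only [one_smul, zero_smul, add_zero] at this
  have hy : x + v = u := by rw [hv]; abel
  rw [hy] at this
  have h10 : (1:ℝ) - 0 = 1 := by norm_num
  rw [h10, div_one] at this
  linarith

/-- Cocoercivity of the gradient of a convex function with Lipschitz gradient. -/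
private theorem cocoercive' {L : ℝ} (hL : 0 < L) {f : E → ℝ} {g : E → E}
    (hconv : ConvexOn ℝ univ f) (hg : ∀ u, HasGradientAt f (g u) u)
    (hLip : ∀ u v, ‖g u - g v‖ ≤ L * ‖u - v‖) (x y : E) :
    f x + ⟪g x, y - x⟫_ℝ + 1 / (2 * L) * ‖g y - g x‖ ^ 2 ≤ f y := by
  have hgh : ∀ u, HasGradientAt (fun u => f u - ⟪g x, u⟫_ℝ) (g u - g x) u :=
    fun u => HasGradientAt.sub' (hg u) (hasGradientAt_inner' (g x) u)
  have hLiph : ∀ u v, ‖(g u - g x) - (g v - g x)‖ ≤ L * ‖u - v‖ := by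
    intro u v
    simpa [sub_sub_sub_cancel_right] using hLip u v
  have hd := descent_lemma hL hgh hLiph y (y - L⁻¹ • (g y - g x))
  have hzy : (y - L⁻¹ • (g y - g x)) - y = -(L⁻¹ • (g y - g x)) := by abel
  rw [hzy] at hd
  have hi1 : ⟪g y - g x, -(L⁻¹ • (g y - g x))⟫_ℝ = -(L⁻¹ * ‖g y - g x‖ ^ 2) := by
    rw [inner_neg_right, real_inner_smul_right, real_inner_self_eq_norm_sq]
  have hi2 : ‖-(L⁻¹ • (g y - g x))‖ ^ 2 = L⁻¹ ^ 2 * ‖g y - g x‖ ^ 2 := by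
    rw [norm_neg, norm_smul, Real.norm_eq_abs, abs_of_pos (inv_pos.mpr hL)]
    ring
  rw [hi1, hi2] at hd
  have hfo := first_order' hconv hg x (y - L⁻¹ • (g y - g x))
  have hin1 : ⟪g x, (y - L⁻¹ • (g y - g x)) - x⟫_ℝ
      = ⟪g x, y - L⁻¹ • (g y - g x)⟫_ℝ - ⟪g x, x⟫_ℝ := inner_sub_right _ _ _
  have hin2 : ⟪g x, y - x⟫_ℝ = ⟪g x, y⟫_ℝ - ⟪g x, x⟫_ℝ := inner_sub_right _ _ _
  have heq : L⁻¹ * ‖g y - g x‖ ^ 2 - L / 2 * (L⁻¹ ^ 2 * ‖g y - g x‖ ^ 2)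
      = 1 / (2 * L) * ‖g y - g x‖ ^ 2 := by
    field_simp
    ring
  rw [hin1] at hfo
  rw [hin2]
  linarith


/-- Gradient bounds (64) used in the analysis of PDG-NDS. -/
theorem stmt_7 {d m : ℕ} (hm : 0 < m) (L : ℝ) (hL : 0 < L)
    (f : Fin m → EuclideanSpace ℝ (Fin d) → ℝ)
    (hconv : ∀ i, ConvexOn ℝ Set.univ (f i))
    (hdiff : ∀ i, Differentiable ℝ (f i))
    (hLip : ∀ i u v, ‖gradient (f i) u - gradient (f i) v‖ ≤ L * ‖u - v‖)
    (F : EuclideanSpace ℝ (Fin d) → ℝ)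
    (hF : ∀ θ, F θ = (1 / (m : ℝ)) * ∑ i, f i θ)
    (θs : EuclideanSpace ℝ (Fin d)) (hθs : gradient F θs = 0) :
    ∀ x : EuclideanSpace ℝ (Fin d),
      (∑ i, ‖gradient (f i) θs - gradient (f i) x‖ ^ 2 ≤ 2 * m * L * (F x - F θs)) ∧
      (∑ i, ‖gradient (f i) x‖ ^ 2 ≤
        4 * m * L * (F x - F θs) + 2 * ∑ i, ‖gradient (f i) θs‖ ^ 2) := by
  intro x
  have hmR : (0:ℝ) < (m:ℝ) := Nat.cast_pos.mpr hm
  have hgi : ∀ i (u : EuclideanSpace ℝ (Fin d)), HasGradientAt (f i) (gradient (f i) u) u :=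
    fun i u => (hdiff i u).hasGradientAt
  -- gradient of F at θs
  have hFg : HasGradientAt F ((1 / (m:ℝ)) • ∑ i, gradient (f i) θs) θs := by
    have hFeq : F = fun θ => (1 / (m:ℝ)) * ∑ i, f i θ := funext hF
    rw [hFeq, hasGradientAt_iff_hasFDerivAt]
    have hsum : HasFDerivAt (fun θ : EuclideanSpace ℝ (Fin d) => ∑ i, f i θ)
        (∑ i, InnerProductSpace.toDual ℝ (EuclideanSpace ℝ (Fin d)) (gradient (f i) θs)) θs :=
      HasFDerivAt.fun_sum (fun i _ => hasGradientAt_iff_hasFDerivAt.mp (hgi i θs))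
    have := hsum.const_mul (1 / (m:ℝ))
    exact this.congr_fderiv (by simp [map_smul, map_sum])
  have hsum0 : ∑ i, gradient (f i) θs = 0 := by
    have h0 : (1 / (m:ℝ)) • ∑ i, gradient (f i) θs = 0 := by
      rw [← hFg.gradient]; exact hθs
    rcases smul_eq_zero.mp h0 with h | h
    · exact absurd h (by positivity)
    · exact h
  -- sum the cocoercivity inequalities
  have hcoco : ∀ i, f i θs + ⟪gradient (f i) θs, x - θs⟫_ℝ
      + 1 / (2 * L) * ‖gradient (f i) x - gradient (f i) θs‖ ^ 2 ≤ f i x :=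
    fun i => cocoercive' hL (hconv i) (hgi i) (hLip i) θs x
  have hsumle : ∑ i, f i θs + ⟪∑ i, gradient (f i) θs, x - θs⟫_ℝ
      + 1 / (2 * L) * ∑ i, ‖gradient (f i) x - gradient (f i) θs‖ ^ 2 ≤ ∑ i, f i x := by
    have := Finset.sum_le_sum (fun i (_ : i ∈ Finset.univ) => hcoco i)
    rw [Finset.sum_add_distrib, Finset.sum_add_distrib] at this
    rw [sum_inner, Finset.mul_sum]
    exact this
  rw [hsum0, inner_zero_left, add_zero] at hsumle
  have hFx : ∑ i, f i x = (m:ℝ) * F x := by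
    rw [hF x]; field_simp
  have hFθ : ∑ i, f i θs = (m:ℝ) * F θs := by
    rw [hF θs]; field_simp
  rw [hFx, hFθ] at hsumle
  have hSrev : ∑ i, ‖gradient (f i) θs - gradient (f i) x‖ ^ 2
      = ∑ i, ‖gradient (f i) x - gradient (f i) θs‖ ^ 2 := by
    apply Finset.sum_congr rfl
    intro i _
    rw [norm_sub_rev]
  have part1 : ∑ i, ‖gradient (f i) θs - gradient (f i) x‖ ^ 2
      ≤ 2 * m * L * (F x - F θs) := by
    rw [hSrev]
    have h2L : (0:ℝ) < 2 * L := by linarith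
    have := mul_le_mul_of_nonneg_left (sub_nonneg.mpr
      ((le_sub_iff_add_le').mpr hsumle)) h2L.le
    calc ∑ i, ‖gradient (f i) x - gradient (f i) θs‖ ^ 2
        = (2 * L) * (1 / (2 * L) * ∑ i, ‖gradient (f i) x - gradient (f i) θs‖ ^ 2) := by
          field_simp
      _ ≤ (2 * L) * ((m:ℝ) * F x - (m:ℝ) * F θs) := by
          apply mul_le_mul_of_nonneg_left _ h2L.le
          linarith
      _ = 2 * m * L * (F x - F θs) := by ring
  refine ⟨part1, ?_⟩
  have hpt : ∀ i, ‖gradient (f i) x‖ ^ 2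
      ≤ 2 * ‖gradient (f i) θs - gradient (f i) x‖ ^ 2 + 2 * ‖gradient (f i) θs‖ ^ 2 := by
    intro i
    have h1 : ‖gradient (f i) x‖ ≤ ‖gradient (f i) θs - gradient (f i) x‖
        + ‖gradient (f i) θs‖ := by
      calc ‖gradient (f i) x‖
          = ‖gradient (f i) θs - (gradient (f i) θs - gradient (f i) x)‖ := by
            congr 1; abel
        _ ≤ ‖gradient (f i) θs‖ + ‖gradient (f i) θs - gradient (f i) x‖ := norm_sub_le _ _
        _ = _ := by ring
    have h2 : ‖gradient (f i) x‖ ^ 2 ≤ (‖gradient (f i) θs - gradient (f i) x‖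
        + ‖gradient (f i) θs‖) ^ 2 := pow_le_pow_left₀ (norm_nonneg _) h1 2
    nlinarith [h2, sq_nonneg (‖gradient (f i) θs - gradient (f i) x‖ - ‖gradient (f i) θs‖)]
  have hsum2 : ∑ i, ‖gradient (f i) x‖ ^ 2
      ≤ 2 * ∑ i, ‖gradient (f i) θs - gradient (f i) x‖ ^ 2
        + 2 * ∑ i, ‖gradient (f i) θs‖ ^ 2 := by
    have := Finset.sum_le_sum (fun i (_ : i ∈ Finset.univ) => hpt i)
    rw [Finset.sum_add_distrib, ← Finset.mul_sum, ← Finset.mul_sum] at this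
    exact this
  linarith [part1]

end Helpers
end

section
/- Let W ∈ ℝ^{m×m} be nonnegative doubly stochastic with η := ‖W − (1/m)𝟙𝟙ᵀ‖ ∈ (0,1). Suppose vectors x_i^k, y_i^k ∈ ℝ^d satisfy the stacked update x^{k+1} = (W ⊗ I_d)x^k − y^k, and let x̄^k = (1/m)∑_i x_i^k, ȳ^k = (1/m)∑_i y_i^k. Then ∑_{i=1}^m ‖x_i^{k+1} − x̄^{k+1}‖² ≤ η ∑_{i=1}^m ‖x_i^k − x̄^k‖² + (1 − η)^{-1} ∑_{i=1}^m ‖y_i^k − ȳ^k‖². -/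
open Filter Topology

/-- Spectral (induced Euclidean) norm of a real square matrix. -/
noncomputable def specNorm {m : ℕ} (A : Matrix (Fin m) (Fin m) ℝ) : ℝ :=
  ‖Matrix.toEuclideanCLM (𝕜 := ℝ) A‖

private lemma stmt_11_aux {η U Q R P : ℝ} (hη0 : 0 < η) (hη1 : η < 1)
    (hU : 0 ≤ U) (hQ : 0 ≤ Q) (hR : 0 ≤ R) (hP : 0 ≤ P)
    (hPU : P ^ 2 ≤ η ^ 2 * U ^ 2) (hRPQ : R ≤ P + Q) :
    R ^ 2 ≤ η * U ^ 2 + (1 - η)⁻¹ * Q ^ 2 := by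
  have hηU : 0 ≤ η * U := mul_nonneg hη0.le hU
  have hPle : P ≤ η * U := by nlinarith
  have hR2 : R ≤ η * U + Q := by linarith
  have hc0 : 0 < (1 - η)⁻¹ := inv_pos.2 (by linarith)
  have hc1 : (1 - η) * (1 - η)⁻¹ = 1 := mul_inv_cancel₀ (by linarith)
  have hsq : R ^ 2 ≤ (η * U + Q) ^ 2 := pow_le_pow_left₀ hR hR2 2
  nlinarith [mul_nonneg (mul_nonneg hη0.le hc0.le) (sq_nonneg ((1 - η) * U - Q))]

/-- Relation (67): consensus contraction for the update `x^{k+1} = (W ⊗ I_d)x^k − y^k`. -/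
theorem stmt_11 {d m : ℕ} (hm : 0 < m)
    (W : Matrix (Fin m) (Fin m) ℝ)
    (hWnn : ∀ i j, 0 ≤ W i j)
    (hWrow : ∀ i, ∑ j, W i j = 1)
    (hWcol : ∀ j, ∑ i, W i j = 1)
    (η : ℝ) (hηdef : η = specNorm (W - Matrix.of fun _ _ => (1 : ℝ) / m))
    (hη : η ∈ Set.Ioo (0 : ℝ) 1)
    (x y : ℕ → Fin m → EuclideanSpace ℝ (Fin d))
    (hupd : ∀ k i, x (k + 1) i = (∑ j, W i j • x k j) - y k i)
    (xbar ybar : ℕ → EuclideanSpace ℝ (Fin d))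
    (hxbar : ∀ k, xbar k = (1 / (m : ℝ)) • ∑ i, x k i)
    (hybar : ∀ k, ybar k = (1 / (m : ℝ)) • ∑ i, y k i) :
    ∀ k, (∑ i, ‖x (k + 1) i - xbar (k + 1)‖ ^ 2) ≤
      η * (∑ i, ‖x k i - xbar k‖ ^ 2) + (1 - η)⁻¹ * (∑ i, ‖y k i - ybar k‖ ^ 2) := by
  intro k
  obtain ⟨hη0, hη1⟩ := hη
  have hm' : (m : ℝ) ≠ 0 := Nat.cast_ne_zero.2 hm.ne'
  set A : Matrix (Fin m) (Fin m) ℝ := W - Matrix.of fun _ _ => (1 : ℝ) / m with hA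
  set u : Fin m → EuclideanSpace ℝ (Fin d) := fun i => x k i - xbar k with hu
  set v : Fin m → EuclideanSpace ℝ (Fin d) := fun i => y k i - ybar k with hv
  -- sum of u is 0
  have hsumu : ∑ j, u j = 0 := by
    simp only [hu, Finset.sum_sub_distrib, Finset.sum_const, Finset.card_univ,
      Fintype.card_fin, hxbar k, sub_eq_zero]
    rw [← Nat.cast_smul_eq_nsmul ℝ m, smul_smul, mul_one_div, div_self hm', one_smul]
  -- average evolution
  have hxbar1 : xbar (k + 1) = xbar k - ybar k := by
    rw [hxbar, hxbar, hybar]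
    simp only [hupd]
    rw [Finset.sum_sub_distrib, smul_sub]
    congr 1
    rw [Finset.sum_comm]
    congr 1
    refine Finset.sum_congr rfl fun j _ => ?_
    rw [← Finset.sum_smul, hWcol, one_smul]
  -- pointwise identity
  have hkey : ∀ i, x (k + 1) i - xbar (k + 1) = (∑ j, A i j • u j) - v i := by
    intro i
    have h1 : ∑ j, A i j • u j = ∑ j, W i j • u j := by
      simp only [hA, Matrix.sub_apply, Matrix.of_apply, sub_smul, Finset.sum_sub_distrib,
        ← Finset.smul_sum, hsumu, smul_zero, sub_zero]
    rw [h1, hupd, hxbar1, hv]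
    have h2 : ∑ j, W i j • u j = (∑ j, W i j • x k j) - xbar k := by
      simp only [hu, smul_sub, Finset.sum_sub_distrib, ← Finset.sum_smul, hWrow, one_smul]
    rw [h2]
    beta_reduce
    abel
  -- squared-norm identities
  have hcoord : ∀ (w : EuclideanSpace ℝ (Fin d)), ‖w‖ ^ 2 = ∑ r, (w r) ^ 2 := by
    intro w
    rw [PiLp.norm_sq_eq_of_L2]
    simp [Real.norm_eq_abs, sq_abs]
  have hcoordm : ∀ (w : EuclideanSpace ℝ (Fin m)), ‖w‖ ^ 2 = ∑ r, (w r) ^ 2 := by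
    intro w
    rw [PiLp.norm_sq_eq_of_L2]
    simp [Real.norm_eq_abs, sq_abs]
  -- stacked vectors in PiLp 2
  set p : PiLp 2 (fun _ : Fin m => EuclideanSpace ℝ (Fin d)) := (WithLp.equiv 2 _).symm (fun i => ∑ j, A i j • u j) with hp
  set q : PiLp 2 (fun _ : Fin m => EuclideanSpace ℝ (Fin d)) := (WithLp.equiv 2 _).symm v with hq
  have hP2 : ‖p‖ ^ 2 = ∑ i, ‖∑ j, A i j • u j‖ ^ 2 := by
    rw [PiLp.norm_sq_eq_of_L2]
    simp [hp]
  have hQ2 : ‖q‖ ^ 2 = ∑ i, ‖v i‖ ^ 2 := by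
    rw [PiLp.norm_sq_eq_of_L2]
    simp [hq]
  have hPQ2 : ‖p - q‖ ^ 2 = ∑ i, ‖(∑ j, A i j • u j) - v i‖ ^ 2 := by
    rw [PiLp.norm_sq_eq_of_L2]
    simp [hp, hq]
  -- spectral norm bound, coordinatewise
  have hUdef : (0:ℝ) ≤ ∑ j, ‖u j‖ ^ 2 := Finset.sum_nonneg fun j _ => sq_nonneg _
  have happly : ∀ (i : Fin m) (r : Fin d), (∑ j, A i j • u j) r = ∑ j, A i j * u j r := by
    intro i r
    calc (∑ j, A i j • u j) r = EuclideanSpace.proj (𝕜 := ℝ) r (∑ j, A i j • u j) := rfl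
      _ = ∑ j, EuclideanSpace.proj (𝕜 := ℝ) r (A i j • u j) := map_sum _ _ _
      _ = ∑ j, A i j * u j r := by simp
  have hPbound : ‖p‖ ^ 2 ≤ η ^ 2 * ∑ j, ‖u j‖ ^ 2 := by
    rw [hP2]
    calc ∑ i, ‖∑ j, A i j • u j‖ ^ 2
        = ∑ i, ∑ r, (∑ j, A i j * u j r) ^ 2 := by
          refine Finset.sum_congr rfl fun i _ => ?_
          rw [hcoord]
          exact Finset.sum_congr rfl fun r _ => by rw [happly]
      _ = ∑ r, ∑ i, (∑ j, A i j * u j r) ^ 2 := Finset.sum_comm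
      _ ≤ ∑ r, η ^ 2 * ∑ j, (u j r) ^ 2 := by
          refine Finset.sum_le_sum fun r _ => ?_
          set z : EuclideanSpace ℝ (Fin m) := (WithLp.equiv 2 _).symm (fun j => u j r) with hz
          have h1 : ∀ i, (Matrix.toEuclideanCLM (𝕜 := ℝ) A z) i = ∑ j, A i j * u j r := by
            intro i
            rw [hz, WithLp.equiv_symm_apply, Matrix.toEuclideanCLM_toLp]
            simp [Matrix.toLin'_apply, Matrix.mulVec, dotProduct]
          have h2 : ‖Matrix.toEuclideanCLM (𝕜 := ℝ) A z‖ ≤ η * ‖z‖ := by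
            rw [hηdef]
            exact (Matrix.toEuclideanCLM (𝕜 := ℝ) A).le_opNorm z
          have h3 : ‖z‖ ^ 2 = ∑ j, (u j r) ^ 2 := by
            rw [hcoordm]
            simp [hz]
          calc ∑ i, (∑ j, A i j * u j r) ^ 2
              = ‖Matrix.toEuclideanCLM (𝕜 := ℝ) A z‖ ^ 2 := by
                rw [hcoordm]
                exact (Finset.sum_congr rfl fun i _ => by rw [h1]).symm
            _ ≤ (η * ‖z‖) ^ 2 := pow_le_pow_left₀ (norm_nonneg _) h2 2
            _ = η ^ 2 * ∑ j, (u j r) ^ 2 := by rw [mul_pow, h3]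
      _ = η ^ 2 * ∑ j, ‖u j‖ ^ 2 := by
          rw [← Finset.mul_sum, Finset.sum_comm]
          congr 1
          exact Finset.sum_congr rfl fun j _ => (hcoord (u j)).symm
  -- conclude
  have hUsq : Real.sqrt (∑ j, ‖u j‖ ^ 2) ^ 2 = ∑ j, ‖u j‖ ^ 2 := Real.sq_sqrt hUdef
  have hgoal : ‖p - q‖ ^ 2 ≤
      η * Real.sqrt (∑ j, ‖u j‖ ^ 2) ^ 2 + (1 - η)⁻¹ * ‖q‖ ^ 2 :=
    stmt_11_aux hη0 hη1 (Real.sqrt_nonneg _) (norm_nonneg q) (norm_nonneg _) (norm_nonneg p)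
      (by rw [hUsq]; exact hPbound) (norm_sub_le p q)
  rw [hUsq] at hgoal
  have hfin : (∑ i, ‖x (k + 1) i - xbar (k + 1)‖ ^ 2) = ‖p - q‖ ^ 2 := by
    rw [hPQ2]
    exact Finset.sum_congr rfl fun i _ => by rw [hkey]
  have e1 : (∑ i, ‖x k i - xbar k‖ ^ 2) = ∑ j, ‖u j‖ ^ 2 := rfl
  have e2 : (∑ i, ‖y k i - ybar k‖ ^ 2) = ∑ i, ‖v i‖ ^ 2 := rfl
  rw [hfin, e1, e2, ← hQ2]
  exact hgoal
end

section
/- Let f_i : ℝ^d → ℝ be convex with L-Lipschitz gradients, F = (1/m)∑_i f_i minimized at θ*, g_i^k := ∇f_i(x_i^k). Suppose λ^k ∈ ℝ^m is a nonnegative stepsize vector with positive average λ̄^k = (1/m)∑_i λ_i^k and maximum λ_max^k = max_i λ_i^k, and suppose the averages satisfy x̄^{k+1} = x̄^k − ȳ^k with ȳ^k = (1/m)∑_{i=1}^m λ_i^k g_i^k. Then, with c₁ := max{4L, 4/(mL)}, (2/L)(F(x̄^{k+1}) − F(θ*)) ≤ (2/L)(F(x̄^k) − F(θ*)) + (c₁/λ̄^k)‖λ^k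 − λ̄^k 𝟙‖² · ((2/L)(F(x̄^k) − F(θ*)) + ∑_{i=1}^m ‖∇f_i(θ*)‖²) + (2L/(m λ̄^k))(λ_max^k)² ∑_{i=1}^m ‖x̄^k − x_i^k‖² − (λ̄^k/L)‖∇F(x̄^k)‖² + ((λ̄^k L − 1)/(λ̄^k L))‖ȳ^k‖². -/
open Filter Topology


open RealInnerProductSpace Set

section AuxVec
variable {E : Type*} [NormedAddCommGroup E] [InnerProductSpace ℝ E]

lemma norm_add_sq_le_two (a b : E) : ‖a + b‖ ^ 2 ≤ 2 * ‖a‖ ^ 2 + 2 * ‖b‖ ^ 2 := by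
  have h := norm_add_le a b
  nlinarith [norm_nonneg a, norm_nonneg b, norm_nonneg (a + b), sq_nonneg (‖a‖ - ‖b‖)]

lemma sq_norm_le_two (a b : E) : ‖a‖ ^ 2 ≤ 2 * ‖a - b‖ ^ 2 + 2 * ‖b‖ ^ 2 := by
  have h := norm_add_le (a - b) b
  rw [sub_add_cancel] at h
  nlinarith [norm_nonneg a, norm_nonneg (a - b), norm_nonneg b, sq_nonneg (‖a - b‖ - ‖b‖)]

lemma norm_sum_smul_sq_le {ι : Type*} (s : Finset ι) (c : ι → ℝ) (u : ι → E) :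
    ‖∑ i ∈ s, c i • u i‖ ^ 2 ≤ (∑ i ∈ s, (c i) ^ 2) * (∑ i ∈ s, ‖u i‖ ^ 2) := by
  have h1 : ‖∑ i ∈ s, c i • u i‖ ≤ ∑ i ∈ s, |c i| * ‖u i‖ := by
    calc ‖∑ i ∈ s, c i • u i‖ ≤ ∑ i ∈ s, ‖c i • u i‖ := norm_sum_le _ _
      _ = ∑ i ∈ s, |c i| * ‖u i‖ := by
          exact Finset.sum_congr rfl fun i _ => by rw [norm_smul, Real.norm_eq_abs]
  have h2 : (∑ i ∈ s, |c i| * ‖u i‖) ^ 2 ≤ (∑ i ∈ s, (c i) ^ 2) * (∑ i ∈ s, ‖u i‖ ^ 2) := by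
    have := Finset.sum_mul_sq_le_sq_mul_sq s (fun i => |c i|) (fun i => ‖u i‖)
    simpa [sq_abs] using this
  have h3 : (0:ℝ) ≤ ∑ i ∈ s, |c i| * ‖u i‖ :=
    Finset.sum_nonneg fun i _ => mul_nonneg (abs_nonneg _) (norm_nonneg _)
  nlinarith [norm_nonneg (∑ i ∈ s, c i • u i)]

end AuxVec


open RealInnerProductSpace Set

variable {E : Type*} [NormedAddCommGroup E] [InnerProductSpace ℝ E] [CompleteSpace E]

lemma lineDeriv_aux {f : E → ℝ} (hdiff : Differentiable ℝ f) (x v : E) (t : ℝ) :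
    HasDerivAt (fun s : ℝ => f (x + s • v)) ⟪gradient f (x + t • v), v⟫ t := by
  have h1 : HasDerivAt (fun s : ℝ => x + s • v) v t := by
    simpa using ((hasDerivAt_id t).smul_const v).const_add x
  have h2 : HasFDerivAt f ((InnerProductSpace.toDual ℝ E) (gradient f (x + t • v)))
      (x + t • v) := hasGradientAt_iff_hasFDerivAt.mp (hdiff _).hasGradientAt
  simpa [InnerProductSpace.toDual_apply_apply, Function.comp_def] using h2.comp_hasDerivAt t h1

/-- Quadratic upper bound (descent lemma) for functions with Lipschitz gradient. -/
lemma smooth_upper {f : E → ℝ} {L : ℝ} (hL : 0 < L) (hdiff : Differentiable ℝ f)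
    (hLip : ∀ u v, ‖gradient f u - gradient f v‖ ≤ L * ‖u - v‖) (x v : E) :
    f (x + v) ≤ f x + ⟪gradient f x, v⟫ + L / 2 * ‖v‖ ^ 2 := by
  set φ : ℝ → ℝ := fun t => f (x + t • v) - t * ⟪gradient f x, v⟫ - L / 2 * ‖v‖ ^ 2 * t ^ 2
    with hφ
  have hd : ∀ t : ℝ, HasDerivAt φ
      (⟪gradient f (x + t • v), v⟫ - ⟪gradient f x, v⟫ - L * ‖v‖ ^ 2 * t) t := by
    intro t
    have := ((lineDeriv_aux hdiff x v t).sub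
        ((hasDerivAt_id t).mul_const ⟪gradient f x, v⟫)).sub
        (((hasDerivAt_pow 2 t).const_mul (L / 2 * ‖v‖ ^ 2)))
    exact this.congr_deriv (by norm_num; ring)
  have hmono : AntitoneOn φ (Icc (0:ℝ) 1) := by
    apply antitoneOn_of_deriv_nonpos (convex_Icc 0 1)
    · exact fun t _ => ((hd t).continuousAt).continuousWithinAt
    · exact fun t _ => ((hd t).differentiableAt).differentiableWithinAt
    · intro t ht
      rw [interior_Icc] at ht
      rw [(hd t).deriv]
      have h1 : ⟪gradient f (x + t • v) - gradient f x, v⟫ ≤ L * ‖v‖ ^ 2 * t := by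
        calc ⟪gradient f (x + t • v) - gradient f x, v⟫
            ≤ ‖gradient f (x + t • v) - gradient f x‖ * ‖v‖ := real_inner_le_norm _ _
          _ ≤ L * ‖x + t • v - x‖ * ‖v‖ := by
              have := hLip (x + t • v) x
              nlinarith [norm_nonneg v]
          _ = L * ‖v‖ ^ 2 * t := by
              rw [add_sub_cancel_left, norm_smul, Real.norm_eq_abs,
                abs_of_pos ht.1]; ring
      rw [inner_sub_left] at h1
      linarith
  have := hmono (left_mem_Icc.mpr zero_le_one) (right_mem_Icc.mpr zero_le_one) zero_le_one
  simp only [hφ, one_smul, zero_smul, add_zero, one_pow, zero_pow, one_mul, zero_mul,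
    mul_zero, sub_zero] at this
  linarith

/-- First-order condition for convex differentiable functions. -/
lemma convex_first_order {f : E → ℝ} (hconv : ConvexOn ℝ univ f)
    (hdiff : Differentiable ℝ f) (v z : E) :
    f v + ⟪gradient f v, z - v⟫ ≤ f z := by
  set g : ℝ → ℝ := fun t => f (v + t • (z - v)) with hg
  have hgconv : ConvexOn ℝ univ g := by
    have := hconv.comp_affineMap (AffineMap.lineMap v z : ℝ →ᵃ[ℝ] E)
    simp only [preimage_univ] at this
    have e : g = f ∘ AffineMap.lineMap v z := by
      funext t
      simp [hg, AffineMap.lineMap_apply, add_comm]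
    rw [e]; exact this
  have hder : HasDerivAt g ⟪gradient f v, z - v⟫ 0 := by
    have := lineDeriv_aux hdiff v (z - v) 0
    simpa using this
  have := hgconv.le_slope_of_hasDerivWithinAt_Ioi (mem_univ 0) (mem_univ 1) one_pos
    (hder.hasDerivWithinAt)
  rw [slope_def_field] at this
  have hg0 : g 0 = f v := by simp [hg]
  have hg1 : g 1 = f z := by simp [hg]
  rw [hg0, hg1] at this
  rw [sub_zero, div_one] at this
  linarith

/-- Co-coercivity / Bregman lower bound for convex L-smooth functions. -/
lemma cocoercivity {f : E → ℝ} {L : ℝ} (hL : 0 < L) (hconv : ConvexOn ℝ univ f)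
    (hdiff : Differentiable ℝ f)
    (hLip : ∀ u v, ‖gradient f u - gradient f v‖ ≤ L * ‖u - v‖) (u v : E) :
    ‖gradient f u - gradient f v‖ ^ 2 ≤
      2 * L * (f u - f v - ⟪gradient f v, u - v⟫) := by
  set w : E := -((1 / L) • (gradient f u - gradient f v)) with hw
  have h1 : f (u + w) ≤ f u + ⟪gradient f u, w⟫ + L / 2 * ‖w‖ ^ 2 :=
    smooth_upper hL hdiff hLip u w
  have h2 : f v + ⟪gradient f v, (u + w) - v⟫ ≤ f (u + w) :=
    convex_first_order hconv hdiff v (u + w)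
  have hnw : ‖w‖ ^ 2 = (1 / L) ^ 2 * ‖gradient f u - gradient f v‖ ^ 2 := by
    rw [hw, norm_neg, norm_smul, Real.norm_eq_abs, abs_of_pos (by positivity : (0:ℝ) < 1/L)]
    ring
  have hiw : ⟪gradient f u, w⟫ - ⟪gradient f v, w⟫ =
      -(1 / L) * ‖gradient f u - gradient f v‖ ^ 2 := by
    rw [← inner_sub_left, hw, inner_neg_right, inner_smul_right,
      real_inner_self_eq_norm_sq]
    ring
  have h3 : (u + w) - v = (u - v) + w := by abel
  rw [h3, inner_add_right] at h2
  have e1 : L / 2 * (1 / L) ^ 2 = 1 / (2 * L) := by field_simp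
  have hnw' : L / 2 * ‖w‖ ^ 2 = 1 / (2 * L) * ‖gradient f u - gradient f v‖ ^ 2 := by
    rw [hnw, ← mul_assoc, e1]
  have e3 : (1:ℝ) / L * ‖gradient f u - gradient f v‖ ^ 2
      - 1 / (2 * L) * ‖gradient f u - gradient f v‖ ^ 2
      = 1 / (2 * L) * ‖gradient f u - gradient f v‖ ^ 2 := by field_simp; ring
  have key : 1 / (2 * L) * ‖gradient f u - gradient f v‖ ^ 2 ≤
      f u - f v - ⟪gradient f v, u - v⟫ := by linarith
  have e2 : (2 * L) * (1 / (2 * L)) = 1 := by field_simp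
  nlinarith [mul_le_mul_of_nonneg_left key (by positivity : (0:ℝ) ≤ 2 * L)]

set_option maxHeartbeats 1000000 in
lemma scalar_final {L lb m c1 P Q S T Y2 G2 D2 A2 B2 ip lmax Fp : ℝ}
    (hL : 0 < L) (hlb : 0 < lb) (hm : 1 ≤ m)
    (hP : 0 ≤ P) (hQ : 0 ≤ Q) (hS : 0 ≤ S) (hT : 0 ≤ T)
    (hc1a : 4*L ≤ c1) (hc1b : 4/(m*L) ≤ c1)
    (hdesc : Fp ≤ P - ip + L/2*Y2)
    (hip : D2 = Y2 - 2*lb*ip + lb^2*G2)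
    (hD2 : D2 ≤ 2*A2 + 2*B2)
    (hA : A2 ≤ L^2/m*lmax^2*S)
    (hB : B2 ≤ (1/m)^2*T*(4*L*m*P + 2*Q)) :
    2/L*Fp ≤ 2/L*P + c1/lb*T*(2/L*P+Q) + 2*L/(m*lb)*lmax^2*S - lb/L*G2
      + (lb*L-1)/(lb*L)*Y2 := by
  have hm0 : (0:ℝ) < m := lt_of_lt_of_le one_pos hm
  have h2L : (0:ℝ) ≤ 2/L := by positivity
  have step1 : 2/L*Fp ≤ 2/L*P - 2/L*ip + Y2 := by
    have := mul_le_mul_of_nonneg_left hdesc h2L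
    have he : 2/L*(P - ip + L/2*Y2) = 2/L*P - 2/L*ip + Y2 := by
      field_simp
    linarith [this, he.le, he.ge]
  have key1 : 2/L*P - 2/L*ip + Y2
      = 2/L*P + D2/(lb*L) - lb/L*G2 + (lb*L-1)/(lb*L)*Y2 := by
    rw [hip]; field_simp; ring
  have step3 : D2/(lb*L) ≤ c1/lb*T*(2/L*P+Q) + 2*L/(m*lb)*lmax^2*S := by
    have hD2' : D2 ≤ 2*(L^2/m*lmax^2*S) + 2*((1/m)^2*T*(4*L*m*P + 2*Q)) := by
      linarith
    have hlbL : (0:ℝ) < lb*L := mul_pos hlb hL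
    have h1 : D2/(lb*L) ≤
        (2*(L^2/m*lmax^2*S) + 2*((1/m)^2*T*(4*L*m*P + 2*Q)))/(lb*L) := by gcongr
    have e1 : (2*(L^2/m*lmax^2*S))/(lb*L) = 2*L/(m*lb)*lmax^2*S := by
      field_simp
    have e2 : (2*((1/m)^2*T*(4*L*m*P + 2*Q)))/(lb*L) = T/lb*(8*P/m + 4*Q/(m^2*L)) := by
      field_simp; ring
    have hinner : 8*P/m + 4*Q/(m^2*L) ≤ c1*(2/L*P+Q) := by
      have i1 : 8*P/m ≤ 8*P := by
        rw [div_le_iff₀ hm0]; nlinarith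
      have i2 : 8*P = 4*L*(2/L*P) := by field_simp; ring
      have i3 : 4*L*(2/L*P) ≤ c1*(2/L*P) := by
        have : (0:ℝ) ≤ 2/L*P := by positivity
        exact mul_le_mul_of_nonneg_right hc1a this
      have i4 : 4*Q/(m^2*L) ≤ 4/(m*L)*Q := by
        rw [show 4/(m*L)*Q = 4*Q/(m*L) by ring,
          div_le_div_iff₀ (by positivity) (by positivity)]
        nlinarith [mul_nonneg (mul_nonneg (mul_nonneg hQ hL.le) hm0.le)
          (sub_nonneg.mpr hm)]
      have i5 : 4/(m*L)*Q ≤ c1*Q := mul_le_mul_of_nonneg_right hc1b hQ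
      have i6 : c1*(2/L*P+Q) = c1*(2/L*P)+c1*Q := by ring
      linarith [i1, i3, i4, i5]
    have hfin : T/lb*(8*P/m + 4*Q/(m^2*L)) ≤ c1/lb*T*(2/L*P+Q) := by
      have hTlb : (0:ℝ) ≤ T/lb := by positivity
      have := mul_le_mul_of_nonneg_left hinner hTlb
      calc T/lb*(8*P/m + 4*Q/(m^2*L)) ≤ T/lb*(c1*(2/L*P+Q)) := this
        _ = c1/lb*T*(2/L*P+Q) := by ring
    have hsplit : (2*(L^2/m*lmax^2*S) + 2*((1/m)^2*T*(4*L*m*P + 2*Q)))/(lb*L)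
        = (2*(L^2/m*lmax^2*S))/(lb*L) + (2*((1/m)^2*T*(4*L*m*P + 2*Q)))/(lb*L) := by
      ring
    rw [hsplit, e1, e2] at h1
    linarith
  linarith [step1, key1.le, key1.ge, step3]



/-- The all-ones vector in `EuclideanSpace ℝ (Fin m)`. -/
noncomputable def onesE (m : ℕ) : EuclideanSpace ℝ (Fin m) :=
  (WithLp.equiv 2 (Fin m → ℝ)).symm fun _ => 1

set_option maxHeartbeats 2000000 in
/-- Relation (65): Step I estimate for `(2/L)(F(x̄^{k+1}) − F(θ*))` in PDG-NDS. -/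
theorem stmt_13 {d m : ℕ} (hm : 0 < m) (L : ℝ) (hL : 0 < L)
    (f : Fin m → EuclideanSpace ℝ (Fin d) → ℝ)
    (hconv : ∀ i, ConvexOn ℝ Set.univ (f i))
    (hdiff : ∀ i, Differentiable ℝ (f i))
    (hLip : ∀ i u v, ‖gradient (f i) u - gradient (f i) v‖ ≤ L * ‖u - v‖)
    (F : EuclideanSpace ℝ (Fin d) → ℝ)
    (hF : ∀ θ, F θ = (1 / (m : ℝ)) * ∑ i, f i θ)
    (θs : EuclideanSpace ℝ (Fin d)) (hθs : ∀ z, F θs ≤ F z)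
    (lam : ℕ → EuclideanSpace ℝ (Fin m)) (hlam0 : ∀ k i, 0 ≤ lam k i)
    (lambar : ℕ → ℝ) (hlambar : ∀ k, lambar k = (1 / (m : ℝ)) * ∑ i, lam k i)
    (hlambarpos : ∀ k, 0 < lambar k)
    (lammax : ℕ → ℝ) (hlammax : ∀ k, IsGreatest (Set.range fun i => lam k i) (lammax k))
    (x : ℕ → Fin m → EuclideanSpace ℝ (Fin d))
    (xbar : ℕ → EuclideanSpace ℝ (Fin d))
    (hxbar : ∀ k, xbar k = (1 / (m : ℝ)) • ∑ i, x k i)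
    (ybar : ℕ → EuclideanSpace ℝ (Fin d))
    (hybar : ∀ k, ybar k = (1 / (m : ℝ)) • ∑ i, lam k i • gradient (f i) (x k i))
    (hupd : ∀ k, xbar (k + 1) = xbar k - ybar k)
    (c₁ : ℝ) (hc₁ : c₁ = max (4 * L) (4 / (m * L))) :
    ∀ k, 2 / L * (F (xbar (k + 1)) - F θs) ≤
      2 / L * (F (xbar k) - F θs)
        + c₁ / lambar k * ‖lam k - lambar k • onesE m‖ ^ 2 *
            (2 / L * (F (xbar k) - F θs) + ∑ i, ‖gradient (f i) θs‖ ^ 2)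
        + 2 * L / (m * lambar k) * (lammax k) ^ 2 * (∑ i, ‖xbar k - x k i‖ ^ 2)
        - lambar k / L * ‖gradient F (xbar k)‖ ^ 2
        + (lambar k * L - 1) / (lambar k * L) * ‖ybar k‖ ^ 2 := by
  intro k
  have hm0 : (0:ℝ) < m := by exact_mod_cast hm
  have hmR : (1:ℝ) ≤ (m:ℝ) := by exact_mod_cast hm
  set GF : EuclideanSpace ℝ (Fin d) → EuclideanSpace ℝ (Fin d) :=
    fun θ => (1/(m:ℝ)) • ∑ i, gradient (f i) θ with hGF
  -- gradient of F
  have hFgrad : ∀ θ, HasGradientAt F (GF θ) θ := by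
    intro θ
    rw [hasGradientAt_iff_hasFDerivAt]
    have hsum : HasFDerivAt (fun θ => ∑ i, f i θ)
        (∑ i, InnerProductSpace.toDual ℝ _ (gradient (f i) θ)) θ :=
      HasFDerivAt.fun_sum fun i _ =>
        hasGradientAt_iff_hasFDerivAt.mp (hdiff i θ).hasGradientAt
    have h2 := hsum.const_mul (1/(m:ℝ))
    have hFe : F = fun θ => (1/(m:ℝ)) * ∑ i, f i θ := funext hF
    rw [hFe]
    convert h2 using 1
    · rfl
    simp [hGF, map_smul, map_sum]
  have hgradF : ∀ θ, gradient F θ = GF θ := fun θ => (hFgrad θ).gradient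
  have DF : Differentiable ℝ F := fun θ => (hFgrad θ).differentiableAt
  have LipF : ∀ u v, ‖gradient F u - gradient F v‖ ≤ L * ‖u - v‖ := by
    intro u v
    rw [hgradF u, hgradF v]
    have he : GF u - GF v = (1/(m:ℝ)) • ∑ i, (gradient (f i) u - gradient (f i) v) := by
      rw [hGF]; rw [Finset.sum_sub_distrib, smul_sub]
    rw [he, norm_smul]
    have hb : ‖∑ i, (gradient (f i) u - gradient (f i) v)‖ ≤ (m:ℝ) * (L*‖u-v‖) := by
      calc ‖∑ i, (gradient (f i) u - gradient (f i) v)‖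
          ≤ ∑ i, ‖gradient (f i) u - gradient (f i) v‖ := norm_sum_le _ _
        _ ≤ ∑ _i : Fin m, L*‖u-v‖ := Finset.sum_le_sum fun i _ => hLip i u v
        _ = (m:ℝ) * (L*‖u-v‖) := by
            rw [Finset.sum_const, Finset.card_univ, Fintype.card_fin, nsmul_eq_mul]
    calc ‖(1/(m:ℝ))‖ * ‖∑ i, (gradient (f i) u - gradient (f i) v)‖
        ≤ ‖(1/(m:ℝ))‖ * ((m:ℝ) * (L*‖u-v‖)) :=
          mul_le_mul_of_nonneg_left hb (norm_nonneg _)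
      _ = L * ‖u-v‖ := by
          rw [Real.norm_eq_abs, abs_of_pos (by positivity)]; field_simp
  -- gradient sum vanishes at θs
  have hminsum : ∑ i, gradient (f i) θs = 0 := by
    have hloc : IsLocalMin F θs := Filter.Eventually.of_forall fun z => hθs z
    have hfd : fderiv ℝ F θs = 0 := hloc.fderiv_eq_zero
    have hfd2 := (hasGradientAt_iff_hasFDerivAt.mp (hFgrad θs)).fderiv
    rw [hfd] at hfd2
    have h0 : GF θs = 0 := by
      apply (InnerProductSpace.toDual ℝ (EuclideanSpace ℝ (Fin d))).injective
      rw [← hfd2, map_zero]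
    rw [hGF] at h0
    rcases smul_eq_zero.mp h0 with h | h
    · exact absurd h (by positivity)
    · exact h
  have hP : 0 ≤ F (xbar k) - F θs := sub_nonneg.mpr (hθs _)
  have hsum_x : ∑ i, f i (xbar k) = (m:ℝ) * F (xbar k) := by
    rw [hF]; field_simp
  have hsum_s : ∑ i, f i θs = (m:ℝ) * F θs := by
    rw [hF]; field_simp
  -- Bregman / co-coercivity sum
  have hBreg : ∑ i, ‖gradient (f i) (xbar k) - gradient (f i) θs‖^2
      ≤ 2*L*(m:ℝ)*(F (xbar k) - F θs) := by
    calc ∑ i, ‖gradient (f i) (xbar k) - gradient (f i) θs‖^2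
        ≤ ∑ i, 2*L*(f i (xbar k) - f i θs - ⟪gradient (f i) θs, xbar k - θs⟫) :=
          Finset.sum_le_sum fun i _ =>
            cocoercivity hL (hconv i) (hdiff i) (hLip i) (xbar k) θs
      _ = 2*L*((∑ i, f i (xbar k)) - (∑ i, f i θs)
            - ∑ i, ⟪gradient (f i) θs, xbar k - θs⟫) := by
          rw [← Finset.mul_sum, Finset.sum_sub_distrib, Finset.sum_sub_distrib]
      _ = 2*L*(m:ℝ)*(F (xbar k) - F θs) := by
          rw [hsum_x, hsum_s, ← sum_inner, hminsum, inner_zero_left]; ring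
  have hQbound : ∑ i, ‖gradient (f i) (xbar k)‖^2
      ≤ 4*L*(m:ℝ)*(F (xbar k) - F θs) + 2*(∑ i, ‖gradient (f i) θs‖^2) := by
    have h1 : ∑ i, ‖gradient (f i) (xbar k)‖^2
        ≤ ∑ i, (2*‖gradient (f i) (xbar k) - gradient (f i) θs‖^2
            + 2*‖gradient (f i) θs‖^2) :=
      Finset.sum_le_sum fun i _ => sq_norm_le_two _ _
    rw [Finset.sum_add_distrib, ← Finset.mul_sum, ← Finset.mul_sum] at h1
    linarith
  -- decomposition
  set A : EuclideanSpace ℝ (Fin d) :=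
    (1/(m:ℝ)) • ∑ i, lam k i • (gradient (f i) (x k i) - gradient (f i) (xbar k))
    with hAdef
  set B : EuclideanSpace ℝ (Fin d) :=
    (1/(m:ℝ)) • ∑ i, (lam k i - lambar k) • gradient (f i) (xbar k) with hBdef
  have hdecomp : ybar k - lambar k • GF (xbar k) = A + B := by
    rw [hybar, hGF, hAdef, hBdef]
    rw [smul_comm, ← smul_sub, ← smul_add]
    congr 1
    rw [Finset.smul_sum, ← Finset.sum_sub_distrib, ← Finset.sum_add_distrib]
    exact Finset.sum_congr rfl fun i _ => by module
  -- bound on A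
  obtain ⟨i0, hi0⟩ := (hlammax k).1
  have hlmax0 : 0 ≤ lammax k := hi0 ▸ hlam0 k i0
  have hle : ∀ i, lam k i ≤ lammax k := fun i => (hlammax k).2 ⟨i, rfl⟩
  have hAbound : ‖A‖^2 ≤ L^2/(m:ℝ) * (lammax k)^2 * (∑ i, ‖xbar k - x k i‖^2) := by
    have h1 : ‖∑ i, lam k i • (gradient (f i) (x k i) - gradient (f i) (xbar k))‖
        ≤ lammax k * L * ∑ i, ‖xbar k - x k i‖ := by
      calc ‖∑ i, lam k i • (gradient (f i) (x k i) - gradient (f i) (xbar k))‖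
          ≤ ∑ i, ‖lam k i • (gradient (f i) (x k i) - gradient (f i) (xbar k))‖ :=
            norm_sum_le _ _
        _ ≤ ∑ i, lammax k * (L * ‖xbar k - x k i‖) := by
            apply Finset.sum_le_sum
            intro i _
            rw [norm_smul, Real.norm_eq_abs, abs_of_nonneg (hlam0 k i)]
            have hw : ‖gradient (f i) (x k i) - gradient (f i) (xbar k)‖
                ≤ L * ‖xbar k - x k i‖ := by
              rw [← norm_sub_rev (x k i)]
              exact hLip i _ _
            exact mul_le_mul (hle i) hw (norm_nonneg _) hlmax0
        _ = lammax k * L * ∑ i, ‖xbar k - x k i‖ := by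
            rw [Finset.mul_sum]
            exact Finset.sum_congr rfl fun i _ => by ring
    have hcs : (∑ i, ‖xbar k - x k i‖)^2 ≤ (m:ℝ) * ∑ i, ‖xbar k - x k i‖^2 := by
      have := Finset.sum_mul_sq_le_sq_mul_sq Finset.univ
        (fun i : Fin m => ‖xbar k - x k i‖) (fun _ => (1:ℝ))
      simpa [Finset.card_univ, mul_comm] using this
    have hnn : (0:ℝ) ≤ ∑ i, ‖xbar k - x k i‖ :=
      Finset.sum_nonneg fun i _ => norm_nonneg _
    have h2 : ‖A‖^2 ≤ (1/(m:ℝ))^2 * ((lammax k * L * ∑ i, ‖xbar k - x k i‖)^2) := by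
      rw [hAdef, norm_smul, mul_pow, Real.norm_eq_abs, sq_abs]
      have := pow_le_pow_left₀ (norm_nonneg _) h1 2
      nlinarith [sq_nonneg ((1:ℝ)/(m:ℝ))]
    have h3 : (lammax k * L * ∑ i, ‖xbar k - x k i‖)^2
        ≤ (lammax k)^2 * L^2 * ((m:ℝ) * ∑ i, ‖xbar k - x k i‖^2) := by
      have e : (lammax k * L * ∑ i, ‖xbar k - x k i‖)^2
          = (lammax k)^2 * L^2 * (∑ i, ‖xbar k - x k i‖)^2 := by ring
      rw [e]
      exact mul_le_mul_of_nonneg_left hcs (by positivity)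
    calc ‖A‖^2 ≤ (1/(m:ℝ))^2 * ((lammax k * L * ∑ i, ‖xbar k - x k i‖)^2) := h2
      _ ≤ (1/(m:ℝ))^2 * ((lammax k)^2 * L^2 * ((m:ℝ) * ∑ i, ‖xbar k - x k i‖^2)) :=
          mul_le_mul_of_nonneg_left h3 (by positivity)
      _ = L^2/(m:ℝ) * (lammax k)^2 * (∑ i, ‖xbar k - x k i‖^2) := by
          field_simp
  -- bound on B
  have hBbound : ‖B‖^2 ≤ (1/(m:ℝ))^2 * (∑ i, (lam k i - lambar k)^2)
      * (∑ i, ‖gradient (f i) (xbar k)‖^2) := by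
    rw [hBdef, norm_smul, mul_pow, Real.norm_eq_abs, sq_abs]
    rw [mul_assoc]
    apply mul_le_mul_of_nonneg_left _ (by positivity)
    exact norm_sum_smul_sq_le Finset.univ _ _
  -- norm of lambda deviation
  have hTnorm : ‖lam k - lambar k • onesE m‖^2 = ∑ i, (lam k i - lambar k)^2 := by
    rw [EuclideanSpace.norm_eq, Real.sq_sqrt (Finset.sum_nonneg fun i _ => by positivity)]
    apply Finset.sum_congr rfl
    intro i _
    have he : (lam k - lambar k • onesE m) i = lam k i - lambar k := by
      simp [onesE]
    rw [he, Real.norm_eq_abs, sq_abs]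
  have hD2 : ‖ybar k - lambar k • GF (xbar k)‖^2 ≤ 2*‖A‖^2 + 2*‖B‖^2 := by
    rw [hdecomp]; exact norm_add_sq_le_two A B
  have hipid : ‖ybar k - lambar k • GF (xbar k)‖^2
      = ‖ybar k‖^2 - 2*lambar k*⟪GF (xbar k), ybar k⟫ + (lambar k)^2*‖GF (xbar k)‖^2 := by
    have h1 : ‖lambar k • GF (xbar k)‖^2 = (lambar k)^2 * ‖GF (xbar k)‖^2 := by
      rw [norm_smul, mul_pow, Real.norm_eq_abs, sq_abs]
    rw [norm_sub_sq_real, h1, real_inner_smul_right, real_inner_comm]; ring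
  have hdesc : F (xbar (k+1)) ≤ F (xbar k) - ⟪GF (xbar k), ybar k⟫ + L/2*‖ybar k‖^2 := by
    have h := smooth_upper hL DF LipF (xbar k) (-(ybar k))
    rw [hgradF] at h
    rw [hupd k, sub_eq_add_neg]
    simpa [inner_neg_right, ← sub_eq_add_neg] using h
  -- assemble
  rw [hgradF, hTnorm]
  have hB' : ‖B‖^2 ≤ (1/(m:ℝ))^2 * (∑ i, (lam k i - lambar k)^2)
      * (4*L*(m:ℝ)*(F (xbar k) - F θs) + 2*(∑ i, ‖gradient (f i) θs‖^2)) := by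
    calc ‖B‖^2 ≤ (1/(m:ℝ))^2 * (∑ i, (lam k i - lambar k)^2)
        * (∑ i, ‖gradient (f i) (xbar k)‖^2) := hBbound
      _ ≤ _ := by
          apply mul_le_mul_of_nonneg_left hQbound (by positivity)
  exact scalar_final hL (hlambarpos k) hmR hP
    (Finset.sum_nonneg fun i _ => by positivity)
    (Finset.sum_nonneg fun i _ => by positivity)
    (Finset.sum_nonneg fun i _ => by positivity)
    (hc₁ ▸ le_max_left _ _) (hc₁ ▸ le_max_right _ _)
    (by linarith [hdesc]) hipid hD2 hAbound hB'
end

section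
/- Let W ∈ ℝ^{m×m} be nonnegative doubly stochastic, B^k nonnegative column-stochastic, Λ^k = diag(λ₁^k,…,λ_m^k), and let g^k = (g₁^k,…,g_m^k) ∈ ℝ^{md} be arbitrary. Suppose x^1 = (W ⊗ I_d)x^0 − (Λ^0 ⊗ I_d)g^0, y^k := (W ⊗ I_d)x^k − x^{k+1}, and y^{k+1} = (W ⊗ I_d)y^k + ((B^k Λ^{k+1}) ⊗ I_d)g^{k+1} − ((B^k Λ^k) ⊗ I_d)g^k for all k ≥ 0. Then the average ȳ^k = (1/m)∑_{i=1}^m y_i^k satisfies ȳ^k = (1/m)∑_{i=1}^m λ_i^k g_i^k for all k ≥ 0, and consequently x̄^{k+1} = x̄^k − (1/m)∑_{i=1}^m λ_i^k g_i^k. -/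
open Filter Topology

/-- Relations (39)–(40): the auxiliary variable `y^k` of PDG-NDS tracks the
stepsize-weighted average of the gradients. -/
theorem stmt_18 {d m : ℕ} (hm : 0 < m)
    (W : Matrix (Fin m) (Fin m) ℝ)
    (hWnn : ∀ i j, 0 ≤ W i j)
    (hWrow : ∀ i, ∑ j, W i j = 1)
    (hWcol : ∀ j, ∑ i, W i j = 1)
    (B : ℕ → Matrix (Fin m) (Fin m) ℝ)
    (hBnn : ∀ k i j, 0 ≤ B k i j)
    (hBcol : ∀ k j, ∑ i, B k i j = 1)
    (lam : ℕ → Fin m → ℝ)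
    (g : ℕ → Fin m → EuclideanSpace ℝ (Fin d))
    (x y : ℕ → Fin m → EuclideanSpace ℝ (Fin d))
    (hinit : ∀ i, x 1 i = (∑ j, W i j • x 0 j) - lam 0 i • g 0 i)
    (hy : ∀ k i, y k i = (∑ j, W i j • x k j) - x (k + 1) i)
    (hyrec : ∀ k i, y (k + 1) i =
      (∑ j, W i j • y k j)
        + (∑ j, (B k i j * lam (k + 1) j) • g (k + 1) j)
        - (∑ j, (B k i j * lam k j) • g k j))
    (xbar ybar : ℕ → EuclideanSpace ℝ (Fin d))
    (hxbar : ∀ k, xbar k = (1 / (m : ℝ)) • ∑ i, x k i)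
    (hybar : ∀ k, ybar k = (1 / (m : ℝ)) • ∑ i, y k i) :
    (∀ k, ybar k = (1 / (m : ℝ)) • ∑ i, lam k i • g k i) ∧
      ∀ k, xbar (k + 1) = xbar k - (1 / (m : ℝ)) • ∑ i, lam k i • g k i := by
  have key : ∀ k, ∑ i, y k i = ∑ i, lam k i • g k i := by
    intro k
    induction k with
    | zero =>
      apply Finset.sum_congr rfl
      intro i _
      rw [hy 0 i, hinit i]
      abel
    | succ k ih =>
      have h1 : ∑ i, ∑ j, W i j • y k j = ∑ j, y k j := by
        rw [Finset.sum_comm]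
        apply Finset.sum_congr rfl
        intro j _
        rw [← Finset.sum_smul, hWcol j, one_smul]
      have h2 : ∀ l, ∑ i, ∑ j, (B k i j * lam l j) • g l j = ∑ j, lam l j • g l j := by
        intro l
        rw [Finset.sum_comm]
        apply Finset.sum_congr rfl
        intro j _
        rw [← Finset.sum_smul, ← Finset.sum_mul, hBcol k j, one_mul]
      calc ∑ i, y (k+1) i
          = ∑ i, ((∑ j, W i j • y k j)
              + (∑ j, (B k i j * lam (k + 1) j) • g (k + 1) j)
              - (∑ j, (B k i j * lam k j) • g k j)) :=
            Finset.sum_congr rfl fun i _ => hyrec k i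
        _ = (∑ i, ∑ j, W i j • y k j)
              + (∑ i, ∑ j, (B k i j * lam (k + 1) j) • g (k + 1) j)
              - (∑ i, ∑ j, (B k i j * lam k j) • g k j) := by
            rw [Finset.sum_sub_distrib, Finset.sum_add_distrib]
        _ = ∑ i, lam (k+1) i • g (k+1) i := by
            rw [h1, h2, h2, ih]; abel
  constructor
  · intro k
    rw [hybar k, key k]
  · intro k
    have hsumy : ∑ i, y k i = (∑ i, x k i) - ∑ i, x (k+1) i := by
      have : ∑ i, ∑ j, W i j • x k j = ∑ j, x k j := by
        rw [Finset.sum_comm]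
        apply Finset.sum_congr rfl
        intro j _
        rw [← Finset.sum_smul, hWcol j, one_smul]
      calc ∑ i, y k i = ∑ i, ((∑ j, W i j • x k j) - x (k+1) i) :=
            Finset.sum_congr rfl fun i _ => hy k i
        _ = (∑ i, ∑ j, W i j • x k j) - ∑ i, x (k+1) i := Finset.sum_sub_distrib _ _
        _ = (∑ i, x k i) - ∑ i, x (k+1) i := by rw [this]
    rw [hxbar (k+1), hxbar k, ← key k, ← smul_sub, hsumy]
    congr 1
    abel
end
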